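/- arXiv:2306.00493 — 3 statements merged into one kernel-verified Lean document; each statement's English description precedes it below -/
import Mathlib

section
/- Let S be a finite monoid and A = {0, 1, …, k−1} with k ≥ 2. The full S-preclone SOp(A) is finitely generated: SOp(A) = ⟨ {m^{(e,e)}} ∪ { id^s : s ∈ S } ⟩_S, where m^{(e,e)} is the binary S-operation with underlying function m(x,y) := max(x,y) ⊕ 1 (⊕ denoting addition modulo k) and signum (e,e), and id^s is the identity function on A equipped with signum (s). -/
namespace SPreclone

/-- An `S`-operation on `A`: an `(n+1)`-ary operation together with a signum
assigning an element of `S` to each argument. -/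
structure SOp (S A : Type*) where
  n : ℕ
  fn : (Fin (n + 1) → A) → A
  sgn : Fin (n + 1) → S

/-- An `S`-relation on `A`: a family of `(m+1)`-ary relations indexed by `S`. -/
structure SRel (S A : Type*) where
  m : ℕ
  rel : S → Set (Fin (m + 1) → A)

section

variable {S A : Type*} [Monoid S]

/-- `f` S-preserves `ρ`. -/
def SPreserves (f : SOp S A) (ρ : SRel S A) : Prop :=
  ∀ s : S, ∀ r : Fin (f.n + 1) → (Fin (ρ.m + 1) → A),
    (∀ i, r i ∈ ρ.rel (f.sgn i * s)) →
    (fun j => f.fn fun i => r i j) ∈ ρ.rel s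

/-- `S`-polymorphisms of a set of `S`-relations. -/
def SPol (Q : Set (SRel S A)) : Set (SOp S A) := { f | ∀ ρ ∈ Q, SPreserves f ρ }

/-- Invariant `S`-relations of a set of `S`-operations. -/
def SInv (F : Set (SOp S A)) : Set (SRel S A) := { ρ | ∀ f ∈ F, SPreserves f ρ }

/-- The identity operation, with signum `(e)`. -/
def idOp (S A : Type*) [Monoid S] : SOp S A := ⟨0, fun x => x 0, fun _ => 1⟩

/-- Cyclic shift `ζ` of the arguments (and the signa). -/
def cycOp (f : SOp S A) : SOp S A :=
  ⟨f.n, fun x => f.fn fun j => x (j + 1), fun i => f.sgn (i - 1)⟩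

/-- Transposition `τ` of the first two arguments (and their signa). -/
def swapOp (f : SOp S A) : SOp S A :=
  ⟨f.n, fun x => f.fn fun j => x (Equiv.swap 0 1 j), fun i => f.sgn (Equiv.swap 0 1 i)⟩

/-- `∇^s`: adding a fictitious first argument with signum `s`. -/
def nablaOp (s : S) (f : SOp S A) : SOp S A :=
  ⟨f.n + 1, fun x => f.fn fun j => x j.succ, Fin.cases (motive := fun _ => S) s f.sgn⟩

open Classical in
/-- `Δ`: identification of the first two arguments when they have the same signum
(otherwise, and for unary operations, `Δ f := f`). -/
noncomputable def deltaOp (f : SOp S A) : SOp S A :=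
  match f with
  | ⟨0, fn, sgn⟩ => ⟨0, fn, sgn⟩
  | ⟨m + 1, fn, sgn⟩ =>
    if sgn 0 = sgn 1 then
      ⟨m, fun x => fn fun j => x ⟨j.val - 1, by have := j.isLt; omega⟩,
        fun i => sgn i.succ⟩
    else ⟨m + 1, fn, sgn⟩

/-- Composition `(f ∘ g)(x₁,…,x_m,x_{m+1},…,x_{m+n-1}) = f(g(x₁,…,x_m),x_{m+1},…,x_{m+n-1})`,
with signum `(s'₁s₁, …, s'_m s₁, s₂, …, s_n)`. -/
def compOp (f g : SOp S A) : SOp S A :=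
  ⟨g.n + f.n,
   fun x => f.fn fun k => Fin.cases (motive := fun _ => A)
     (g.fn fun i => x ⟨i.val, by have := i.isLt; omega⟩)
     (fun j => x ⟨g.n + 1 + j.val, by have := j.isLt; omega⟩) k,
   fun i =>
     if h : i.val < g.n + 1 then g.sgn ⟨i.val, h⟩ * f.sgn 0
     else f.sgn ⟨i.val - g.n, by have := i.isLt; omega⟩⟩

/-- A set of `S`-operations is an `S`-preclone if it contains the identity and is closed
under `ζ`, `τ`, `∇^s`, `Δ` and composition. -/
def IsSPreclone (F : Set (SOp S A)) : Prop :=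
  idOp S A ∈ F ∧
  (∀ f ∈ F, cycOp f ∈ F) ∧
  (∀ f ∈ F, swapOp f ∈ F) ∧
  (∀ (s : S), ∀ f ∈ F, nablaOp s f ∈ F) ∧
  (∀ f ∈ F, deltaOp f ∈ F) ∧
  (∀ f ∈ F, ∀ g ∈ F, compOp f g ∈ F)

/-- The `S`-preclone generated by `F` (the least `S`-preclone containing `F`). -/
def SSg (F : Set (SOp S A)) : Set (SOp S A) := ⋂₀ { G | IsSPreclone G ∧ F ⊆ G }

/-- `δ^S := (Δ_A)_{s ∈ S}`. -/
def deltaS (S A : Type*) : SRel S A := ⟨1, fun _ => { a | a 0 = a 1 }⟩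

/-- Componentwise cyclic shift of coordinates. -/
def cycRel (ρ : SRel S A) : SRel S A :=
  ⟨ρ.m, fun s => { b | (fun i => b (i - 1)) ∈ ρ.rel s }⟩

/-- Componentwise transposition of the first two coordinates. -/
def swapRel (ρ : SRel S A) : SRel S A :=
  ⟨ρ.m, fun s => { b | (fun i => b (Equiv.swap 0 1 i)) ∈ ρ.rel s }⟩

/-- Componentwise deletion of the first coordinate (identity on unary relations). -/
def prRel (ρ : SRel S A) : SRel S A :=
  match ρ with
  | ⟨0, r⟩ => ⟨0, r⟩
  | ⟨m + 1, r⟩ => ⟨m, fun s => { b | ∃ a ∈ r s, b = fun j => a j.succ }⟩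

/-- Componentwise Cartesian product. -/
def prodRel (ρ ρ' : SRel S A) : SRel S A :=
  ⟨ρ.m + ρ'.m + 1, fun s =>
    { c | (fun i : Fin (ρ.m + 1) => c ⟨i.val, by have := i.isLt; omega⟩) ∈ ρ.rel s ∧
          (fun i : Fin (ρ'.m + 1) => c ⟨ρ.m + 1 + i.val, by have := i.isLt; omega⟩) ∈ ρ'.rel s }⟩

/-- Componentwise intersection; empty if the arities differ. -/
def interRel (ρ ρ' : SRel S A) : SRel S A :=
  if h : ρ.m = ρ'.m then
    ⟨ρ.m, fun s => { a | a ∈ ρ.rel s ∧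
        (fun i : Fin (ρ'.m + 1) => a (Fin.cast (by omega) i)) ∈ ρ'.rel s }⟩
  else ⟨ρ.m, fun _ => ∅⟩

/-- Index translation `μ_v(ρ) := (ρ_{sv})_{s ∈ S}`. -/
def muRel (v : S) (ρ : SRel S A) : SRel S A := ⟨ρ.m, fun s => ρ.rel (s * v)⟩

/-- `v`-self-intersection `(⊓^v ρ)_s := ⋂ { ρ_{s'} ∣ s'v = s }`
(an empty intersection being the full relation). -/
def selfInterRel (v : S) (ρ : SRel S A) : SRel S A :=
  ⟨ρ.m, fun s => { a | ∀ s' : S, s' * v = s → a ∈ ρ.rel s' }⟩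

/-- A set of `S`-relations is an `S`-relational clone if it contains `δ^S` and is
closed under `ζ`, `τ`, `pr`, `×`, `∧`, `μ_v` and `⊓^v`. -/
def IsSRelClone (Q : Set (SRel S A)) : Prop :=
  deltaS S A ∈ Q ∧
  (∀ ρ ∈ Q, cycRel ρ ∈ Q) ∧
  (∀ ρ ∈ Q, swapRel ρ ∈ Q) ∧
  (∀ ρ ∈ Q, prRel ρ ∈ Q) ∧
  (∀ ρ ∈ Q, ∀ ρ' ∈ Q, prodRel ρ ρ' ∈ Q) ∧
  (∀ ρ ∈ Q, ∀ ρ' ∈ Q, interRel ρ ρ' ∈ Q) ∧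
  (∀ (v : S), ∀ ρ ∈ Q, muRel v ρ ∈ Q) ∧
  (∀ (v : S), ∀ ρ ∈ Q, selfInterRel v ρ ∈ Q)

/-- The `S`-relational clone generated by `Q`. -/
def SRg (Q : Set (SRel S A)) : Set (SRel S A) := ⋂₀ { R | IsSRelClone R ∧ Q ⊆ R }

/-- `Γ_F(ρ)`: the least `S`-relation of the same arity containing `ρ` and invariant
for `F` (defined as the intersection of all such). -/
def Gamma (F : Set (SOp S A)) (ρ : SRel S A) : SRel S A :=
  ⟨ρ.m, fun s => ⋂ g ∈ { g : S → Set (Fin (ρ.m + 1) → A) |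
      (⟨ρ.m, g⟩ : SRel S A) ∈ SInv F ∧ ∀ t, ρ.rel t ⊆ g t }, g s⟩

/-- Trivial `S`-operations (trivial projections): projections whose essential
argument has signum `e`. -/
def SJ (S A : Type*) [Monoid S] : Set (SOp S A) :=
  { f | ∃ i : Fin (f.n + 1), f.sgn i = 1 ∧ ∀ x, f.fn x = x i }

/-- A diagonal relation: empty, or defined by an equivalence relation on the coordinates. -/
def IsDiagonal {A : Type*} {m : ℕ} (σ : Set (Fin m → A)) : Prop :=
  σ = ∅ ∨ ∃ ε : Fin m → Fin m → Prop, Equivalence ε ∧ σ = { a | ∀ i j, ε i j → a i = a j }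

/-- `S`-diagonal `S`-relations. -/
def SD (S A : Type*) [Monoid S] : Set (SRel S A) :=
  { ρ | (∀ s, IsDiagonal (ρ.rel s)) ∧
      ∀ s t : S, ({ x | ∃ u, x = u * s } : Set S) ⊆ { x | ∃ u, x = u * t } →
        ρ.rel s ⊆ ρ.rel t }

/-- Projection of an `S`-relation to the rows `z 0, …, z t` (componentwise). -/
def prMulti {t : ℕ} (ρ : SRel S A) (z : Fin (t + 1) → Fin (ρ.m + 1)) : SRel S A :=
  ⟨t, fun s => { b | ∃ a ∈ ρ.rel s, b = fun j => a (z j) }⟩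

/-- One step of the inductive construction of `Γ_F(ρ)`:
`R s ∪ { f(r₁,…,r_n) ∣ f ∈ F, r_j ∈ R (sgn(f)_j * s) }`. -/
def gammaStep (F : Set (SOp S A)) {m : ℕ}
    (R : S → Set (Fin (m + 1) → A)) : S → Set (Fin (m + 1) → A) :=
  fun s => R s ∪ { b | ∃ f ∈ F, ∃ r : Fin (f.n + 1) → (Fin (m + 1) → A),
    (∀ j, r j ∈ R (f.sgn j * s)) ∧ b = fun z => f.fn fun j => r j z }

/-- `χ` is (a presentation of) the `S`-relation `χ^λ`: its rows are enumerated by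
*all* tuples of `A^n` via `e`, and its `s`-component consists exactly of the columns
`κ_i` with `λ i = s`. -/
def IsChi {n : ℕ} (lam : Fin n → S) (χ : SRel S A) : Prop :=
  ∃ e : Fin (χ.m + 1) ≃ (Fin n → A),
    ∀ s, χ.rel s = { c | ∃ i, lam i = s ∧ c = fun z => e z i }

/-- `γ_Q(ρ)`: the least `S`-relation of the same arity containing `ρ` and belonging
to the `S`-relational clone generated by `Q` (defined as the intersection of all such). -/
def gammaQ (Q : Set (SRel S A)) (ρ : SRel S A) : SRel S A :=
  ⟨ρ.m, fun s => ⋂ g ∈ { g : S → Set (Fin (ρ.m + 1) → A) |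
      (⟨ρ.m, g⟩ : SRel S A) ∈ SRg Q ∧ ∀ t, ρ.rel t ⊆ g t }, g s⟩

/-- `π`-dual of an `S`-operation. -/
def opPi (π : Equiv.Perm A) (f : SOp S A) : SOp S A :=
  ⟨f.n, fun x => π (f.fn fun i => π.symm (x i)), f.sgn⟩

/-- `π`-dual of an `S`-relation. -/
def relPi (π : Equiv.Perm A) (ρ : SRel S A) : SRel S A :=
  ⟨ρ.m, fun s => { b | ∃ a ∈ ρ.rel s, b = fun i => π (a i) }⟩

/-- `h`-dual of an `S`-operation (only the signum changes). -/
def opH (h : S ≃* S) (f : SOp S A) : SOp S A :=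
  ⟨f.n, f.fn, fun i => h (f.sgn i)⟩

/-- `h`-dual of an `S`-relation: `ρ^h := (ρ_{h⁻¹(s)})_{s ∈ S}`. -/
def relH (h : S ≃* S) (ρ : SRel S A) : SRel S A :=
  ⟨ρ.m, fun s => ρ.rel (h.symm s)⟩

end

/-- An ordinary (unsigned) operation on `A`. -/
structure UOp (A : Type*) where
  n : ℕ
  fn : (Fin (n + 1) → A) → A

/-- An ordinary (unsigned) relation on `A`. -/
structure URel (A : Type*) where
  m : ℕ
  rel : Set (Fin (m + 1) → A)

/-- Ordinary preservation of a relation by an operation. -/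
def UPreserves {A : Type*} (f : UOp A) (σ : URel A) : Prop :=
  ∀ r : Fin (f.n + 1) → (Fin (σ.m + 1) → A),
    (∀ i, r i ∈ σ.rel) → (fun j => f.fn fun i => r i j) ∈ σ.rel

/-- Polymorphisms of a set of ordinary relations. -/
def UPol {A : Type*} (R : Set (URel A)) : Set (UOp A) := { f | ∀ σ ∈ R, UPreserves f σ }

/-- A clone: contains all projections and is closed under composition. -/
def IsClone {A : Type*} (C : Set (UOp A)) : Prop :=
  (∀ (n : ℕ) (i : Fin (n + 1)), (⟨n, fun x => x i⟩ : UOp A) ∈ C) ∧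
  (∀ f ∈ C, ∀ (m : ℕ) (g : Fin (f.n + 1) → ((Fin (m + 1) → A) → A)),
    (∀ i, (⟨m, g i⟩ : UOp A) ∈ C) → (⟨m, fun x => f.fn fun i => g i x⟩ : UOp A) ∈ C)

/-- The clone generated by a set of operations. -/
def CloneGen {A : Type*} (G : Set (UOp A)) : Set (UOp A) := ⋂₀ { C | IsClone C ∧ G ⊆ C }
set_option linter.unusedSectionVars false
open Fin.NatCast Fin.CommRing

section ProofAux

variable {S A : Type*} [Monoid S] {P : Set (SOp S A)}

private lemma mem_congr {n : ℕ} {f g : (Fin (n+1) → A) → A} {s t : Fin (n+1) → S}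
    (h : (⟨n, f, s⟩ : SOp S A) ∈ P) (hf : f = g) (hs : s = t) :
    (⟨n, g, t⟩ : SOp S A) ∈ P := by subst hf; subst hs; exact h

/-- membership with all-1 signum -/
private def Mem1 (P : Set (SOp S A)) (n : ℕ) (f : (Fin (n+1) → A) → A) : Prop :=
  (⟨n, f, fun _ => 1⟩ : SOp S A) ∈ P

private lemma mem1_congr {n : ℕ} {f g : (Fin (n+1) → A) → A}
    (h : Mem1 P n f) (hf : ∀ x, f x = g x) : Mem1 P n g :=
  mem_congr h (funext hf) rfl

variable (hP : IsSPreclone P)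
include hP

private lemma mem1_delta {n : ℕ} {f : (Fin (n+2) → A) → A} (h : Mem1 P (n+1) f) :
    Mem1 P n (fun x => f fun j => x ⟨j.val - 1, by have := j.isLt; omega⟩) := by
  have hd := hP.2.2.2.2.1 _ h
  have he : deltaOp (⟨n+1, f, fun _ => (1:S)⟩ : SOp S A) =
      (⟨n, fun x => f fun j => x ⟨j.val - 1, by have := j.isLt; omega⟩, fun _ => 1⟩ : SOp S A) := by
    unfold deltaOp; simp
  rwa [he] at hd

private lemma mem1_nabla {n : ℕ} {f : (Fin (n+1) → A) → A} (h : Mem1 P n f) :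
    Mem1 P (n+1) (fun x => f fun j => x j.succ) := by
  have hd := hP.2.2.2.1 1 _ h
  refine mem_congr hd rfl (funext fun i => ?_)
  induction i using Fin.cases <;> simp [nablaOp]

private lemma mem1_cyc {n : ℕ} {f : (Fin (n+1) → A) → A} (h : Mem1 P n f) :
    Mem1 P n (fun x => f fun j => x (j + 1)) := by
  have hd := hP.2.1 _ h
  exact mem_congr hd rfl rfl

private lemma mem1_swap {n : ℕ} {f : (Fin (n+1) → A) → A} (h : Mem1 P n f) :
    Mem1 P n (fun x => f fun j => x (Equiv.swap 0 1 j)) := by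
  have hd := hP.2.2.1 _ h
  exact mem_congr hd rfl rfl

private lemma mem1_id : Mem1 P 0 (fun x => x 0) := hP.1

private lemma mem1_proj : ∀ {n : ℕ} (i : Fin (n+1)), Mem1 P n (fun x => x i)
  | 0, i => by
    have : i = 0 := Fin.ext (by omega)
    subst this; exact mem1_id hP
  | m+1, i => by
    rcases Fin.eq_zero_or_eq_succ i with h0 | ⟨j, hj⟩
    · subst h0
      have h1 : Mem1 P (m+1) (fun x => x (Fin.last m).succ) :=
        mem1_nabla hP (mem1_proj (Fin.last m))
      have h2 := mem1_cyc hP h1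
      refine mem1_congr h2 fun x => ?_
      show x ((Fin.last m).succ + 1) = x 0
      congr 1
      ext
      simp [Fin.add_def]
    · subst hj
      exact mem1_nabla hP (mem1_proj j)

end ProofAux
section ProofPerm

variable {S A : Type*} [Monoid S] {P : Set (SOp S A)}

variable (hP : IsSPreclone P)
include hP

private lemma mem1_perm : ∀ {n : ℕ} (e : Equiv.Perm (Fin (n+1))) {f : (Fin (n+1) → A) → A},
    Mem1 P n f → Mem1 P n (fun x => f fun i => x (e i)) := by
  intro n
  cases n with
  | zero =>
    intro e f hf
    have hei : ∀ i : Fin 1, e i = i := fun i => Fin.ext (by omega)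
    exact mem1_congr hf fun x => congrArg f (funext fun i => (congrArg x (hei i)).symm)
  | succ m =>
    set Good : Set (Equiv.Perm (Fin (m+2))) :=
      { e | ∀ f : (Fin (m+2) → A) → A, Mem1 P (m+1) f → Mem1 P (m+1) (fun x => f fun i => x (e i)) }
      with hGoodDef
    have h1 : (1 : Equiv.Perm (Fin (m+2))) ∈ Good := fun f hf => mem1_congr hf (fun x => rfl)
    have hmul : ∀ e₁, e₁ ∈ Good → ∀ e₂, e₂ ∈ Good → e₁ * e₂ ∈ Good := by
      intro e₁ h₁ e₂ h₂ f hf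
      exact mem1_congr (h₁ _ (h₂ f hf)) (fun x => rfl)
    have hpow : ∀ (c : ℕ) (e : Equiv.Perm (Fin (m+2))), e ∈ Good → e ^ c ∈ Good := by
      intro c e he
      induction c with
      | zero => rw [pow_zero]; exact h1
      | succ c ih => rw [pow_succ]; exact hmul _ ih _ he
    have hinv : ∀ e, e ∈ Good → e⁻¹ ∈ Good := by
      intro e he
      have ho : 0 < orderOf e := orderOf_pos e
      have hmo : e ^ (orderOf e - 1) * e = 1 := by
        rw [← pow_succ, Nat.sub_add_cancel ho, pow_orderOf_eq_one]
      rw [inv_eq_of_mul_eq_one_left hmo]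
      exact hpow _ _ he
    have hζ : finRotate (m+2) ∈ Good := by
      intro f hf
      exact mem1_congr (mem1_cyc hP hf) fun x =>
        congrArg f (funext fun i => congrArg x (finRotate_succ_apply i).symm)
    have hτ : Equiv.swap 0 (finRotate (m+2) 0) ∈ Good := by
      have h01 : finRotate (m+2) 0 = 1 := by rw [finRotate_succ_apply, zero_add]
      rw [h01]
      intro f hf
      exact mem1_congr (mem1_swap hP hf) fun x => rfl
    have hgen : Subgroup.closure {finRotate (m+2), Equiv.swap 0 (finRotate (m+2) 0)} = ⊤ :=
      Equiv.Perm.closure_cycle_adjacent_swap isCycle_finRotate (by simp [support_finRotate]) 0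
    let G' : Subgroup (Equiv.Perm (Fin (m+2))) :=
      { carrier := Good
        one_mem' := h1
        mul_mem' := fun {a b} ha hb => hmul a ha b hb
        inv_mem' := fun {a} ha => hinv a ha }
    intro e f hf
    have he : e ∈ Good := by
      have ht : e ∈ (⊤ : Subgroup (Equiv.Perm (Fin (m+2)))) := trivial
      rw [← hgen] at ht
      refine (Subgroup.closure_le G').mpr ?_ ht
      intro z hz
      rcases hz with h | h
      · rw [h]; exact hζ
      · rw [Set.mem_singleton_iff] at h; rw [h]; exact hτ
    exact he f hf

end ProofPerm
section ProofMinor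

variable {S A : Type*} [Monoid S] {P : Set (SOp S A)}

variable (hP : IsSPreclone P)
include hP

private lemma mem1_merge {n : ℕ} (e : Equiv.Perm (Fin (n+2))) {f : (Fin (n+2) → A) → A}
    (h : Mem1 P (n+1) f) :
    Mem1 P n (fun x => f fun i => x ⟨(e i).val - 1, by have := (e i).isLt; omega⟩) := by
  have h2 := mem1_delta hP (mem1_perm hP e h)
  exact mem1_congr h2 fun x => rfl

private lemma mem1_minor_inj : ∀ (d : ℕ) {n m : ℕ}, m = n + d →
    ∀ {f : (Fin (n+1) → A) → A} (σ : Fin (n+1) → Fin (m+1)), Function.Injective σ →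
    Mem1 P n f → Mem1 P m (fun x => f fun i => x (σ i)) := by
  intro d
  induction d with
  | zero =>
    intro n m hm f σ hσ hf
    subst hm
    have hbij : Function.Bijective σ := Finite.injective_iff_bijective.mp hσ
    have := mem1_perm hP (Equiv.ofBijective σ hbij) hf
    exact mem1_congr this fun x => rfl
  | succ d ih =>
    intro n m hm f σ hσ hf
    have hns : ¬ Function.Surjective σ := by
      intro hs
      have := Fintype.card_le_of_surjective σ hs
      simp only [Fintype.card_fin] at this
      omega
    rw [Function.Surjective] at hns
    push_neg at hns
    obtain ⟨c, hc⟩ := hns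
    have hinj : Function.Injective (Fin.cons c σ : Fin (n+2) → Fin (m+1)) := by
      rw [Fin.cons_injective_iff]
      exact ⟨fun ⟨a, ha⟩ => hc a ha, hσ⟩
    have h₁ : Mem1 P (n+1) (fun y => f fun j => y j.succ) := mem1_nabla hP hf
    have h₂ := ih (n := n+1) (m := m) (by omega) (Fin.cons c σ) hinj h₁
    exact mem1_congr h₂ fun x => congrArg f (funext fun j => congrArg x (by simp))

private lemma mem1_minor : ∀ (n : ℕ) {f : (Fin (n+1) → A) → A}, Mem1 P n f →
    ∀ {m : ℕ} (σ : Fin (n+1) → Fin (m+1)), Mem1 P m (fun x => f fun i => x (σ i)) := by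
  intro n
  induction n using Nat.strong_induction_on with
  | _ n ih =>
    intro f hf m σ
    by_cases hσ : Function.Injective σ
    · have hcard : n + 1 ≤ m + 1 := by
        have := Fintype.card_le_of_injective σ hσ
        simpa using this
      exact mem1_minor_inj hP (m - n) (by omega) σ hσ hf
    · match n, f, hf, ih with
      | 0, f, hf, ih => exact absurd (fun a b _ => Fin.ext (by omega)) hσ
      | n'+1, f, hf, ih =>
        obtain ⟨i₀, i₁, hσeq, hne⟩ := Function.not_injective_iff.mp hσ
        set e : Equiv.Perm (Fin (n'+2)) := (Equiv.swap 0 i₀).trans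
          (Equiv.swap 1 ((Equiv.swap 0 i₀) i₁)) with hedef
        have hsw10 : (Equiv.swap 0 i₀) i₁ ≠ 0 := by
          intro h
          apply hne
          have h2 : (Equiv.swap 0 i₀) i₀ = 0 := Equiv.swap_apply_right 0 i₀
          exact (Equiv.swap 0 i₀).injective (h2.trans h.symm)
        have he₀ : e i₀ = 0 := by
          show (Equiv.swap 1 ((Equiv.swap 0 i₀) i₁)) ((Equiv.swap 0 i₀) i₀) = 0
          rw [Equiv.swap_apply_right]
          exact Equiv.swap_apply_of_ne_of_ne (Fin.ne_of_val_ne (by simp)) (Ne.symm hsw10)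
        have he₁ : e i₁ = 1 := by
          show (Equiv.swap 1 ((Equiv.swap 0 i₀) i₁)) ((Equiv.swap 0 i₀) i₁) = 1
          exact Equiv.swap_apply_right _ _
        have hf' := mem1_merge hP e hf
        set σ' : Fin (n'+1) → Fin (m+1) := fun j =>
          if j.val = 0 then σ i₀ else σ (e.symm ⟨j.val + 1, by have := j.isLt; omega⟩) with hσ'def
        have h₂ := ih n' (by omega) hf' σ'
        refine mem1_congr h₂ fun x => congrArg f (funext fun i => congrArg x ?_)
        show σ' ⟨(e i).val - 1, by have := (e i).isLt; omega⟩ = σ i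
        rcases Nat.lt_or_ge (e i).val 2 with hlt | hge
        · have hx : σ' ⟨(e i).val - 1, by have := (e i).isLt; omega⟩ = σ i₀ := by
            simp only [hσ'def]
            rw [if_pos (by omega)]
          rw [hx]
          rcases (by omega : (e i).val = 0 ∨ (e i).val = 1) with h | h
          · have hik : e i = e i₀ := Fin.ext (by rw [he₀]; simpa using h)
            rw [e.injective hik]
          · have hik : e i = e i₁ := Fin.ext (by rw [he₁]; simpa using h)
            rw [e.injective hik, hσeq]
        · simp only [hσ'def]
          rw [if_neg (by omega)]
          have hmk : (⟨(e i).val - 1 + 1, by have := (e i).isLt; omega⟩ : Fin (n'+2)) = e i :=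
            Fin.ext (show (e i).val - 1 + 1 = (e i).val by omega)
          rw [hmk, Equiv.symm_apply_apply]

end ProofMinor
section ProofComp

variable {S A : Type*} [Monoid S] {P : Set (SOp S A)}

private lemma fin_cases_val0 {N : ℕ} (H0 : A) (Hs : Fin N → A) (t : Fin (N+1))
    (hv : t.val = 0) : (Fin.cases (motive := fun _ => A) H0 Hs t) = H0 := by
  have ht : t = 0 := Fin.ext (by simpa using hv)
  rw [ht, Fin.cases_zero]

private lemma fin_cases_val {N : ℕ} (H0 : A) (Hs : Fin N → A) (t : Fin (N+1)) (v : ℕ)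
    (hv : t.val = v + 1) (hlt : v < N) :
    (Fin.cases (motive := fun _ => A) H0 Hs t) = Hs ⟨v, hlt⟩ := by
  have ht : t = Fin.succ ⟨v, hlt⟩ := Fin.ext (by simpa using hv)
  rw [ht, Fin.cases_succ]

variable (hP : IsSPreclone P)
include hP

private lemma mem1_comp_unary {n : ℕ} {φ : (Fin 1 → A) → A} (hφ : Mem1 P 0 φ)
    {f : (Fin (n+1) → A) → A} (hf : Mem1 P n f) :
    Mem1 P n (fun x => φ fun _ => f x) := by
  have hco := hP.2.2.2.2.2 _ hφ _ hf
  have he : compOp (⟨0, φ, fun _ => 1⟩ : SOp S A) ⟨n, f, fun _ => 1⟩ =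
      ⟨n, fun x => φ (fun kk => Fin.cases (motive := fun _ => A)
          (f fun i => x ⟨i.val, by have := i.isLt; omega⟩)
          (fun j => x ⟨n + 1 + j.val, by have := j.isLt; omega⟩) kk),
        fun i => if h : i.val < n + 1 then (1 : S) * 1 else 1⟩ := rfl
  rw [he] at hco
  refine mem_congr hco (funext fun x => ?_) (funext fun i => by split <;> simp)
  refine congrArg φ (funext fun kk => ?_)
  rw [fin_cases_val0 _ _ _ (by omega)]

private lemma mem1_pointwise {n : ℕ} {w2 : (Fin 2 → A) → A} (hw : Mem1 P 1 w2)
    {f g : (Fin (n+1) → A) → A} (hf : Mem1 P n f) (hg : Mem1 P n g) :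
    Mem1 P n (fun x => w2 (Fin.cases (motive := fun _ => A) (f x) (fun _ => g x))) := by
  -- step 1: plug f into first slot of w2
  have hco1 := hP.2.2.2.2.2 _ hw _ hf
  have he1 : compOp (⟨1, w2, fun _ => 1⟩ : SOp S A) ⟨n, f, fun _ => 1⟩ =
      ⟨n+1, fun x => w2 (fun kk => Fin.cases (motive := fun _ => A)
          (f fun i => x ⟨i.val, by have := i.isLt; omega⟩)
          (fun j => x ⟨n + 1 + j.val, by have := j.isLt; omega⟩) kk),
        fun i => if h : i.val < n + 1 then (1 : S) * 1 else 1⟩ := rfl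
  rw [he1] at hco1
  have hB1 : Mem1 P (n+1) (fun x => w2 (Fin.cases (motive := fun _ => A)
      (f fun i => x ⟨i.val, by have := i.isLt; omega⟩)
      (fun _ => x ⟨n+1, by omega⟩))) := by
    refine mem_congr hco1 (funext fun x => congrArg w2 (funext fun kk => ?_))
      (funext fun i => by split <;> simp)
    induction kk using Fin.cases with
    | zero => simp only [Fin.cases_zero]
    | succ j =>
      simp only [Fin.cases_succ]
      exact congrArg x (Fin.ext (show n + 1 + j.val = n + 1 by omega))
  -- step 2: rotate, so that the remaining slot of w2 comes first
  have hB2' : Mem1 P (n+1) (fun x => w2 (Fin.cases (motive := fun _ => A)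
      (f fun i => x ⟨i.val + 1, by have := i.isLt; omega⟩)
      (fun _ => x 0))) := by
    refine mem1_congr (mem1_cyc hP hB1) fun x => congrArg w2 (funext fun kk => ?_)
    induction kk using Fin.cases with
    | zero =>
      simp only [Fin.cases_zero]
      refine congrArg f (funext fun i => congrArg x (Fin.ext ?_))
      rw [Fin.val_add, Fin.val_one]
      show (i.val + 1) % (n+2) = i.val + 1
      exact Nat.mod_eq_of_lt (by omega)
    | succ j =>
      simp only [Fin.cases_succ]
      refine congrArg x (Fin.ext ?_)
      rw [Fin.val_add, Fin.val_one]
      show ((n+1) + 1) % (n+2) = (0 : Fin (n + (n+1) + 1)).val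
      simp [Nat.mod_self]
  -- step 3: plug g into slot 0
  have hco3 := hP.2.2.2.2.2 _ hB2' _ hg
  have he3 : compOp (⟨n+1, fun x => w2 (Fin.cases (motive := fun _ => A)
        (f fun i => x ⟨i.val + 1, by have := i.isLt; omega⟩)
        (fun _ => x 0)), fun _ => 1⟩ : SOp S A) ⟨n, g, fun _ => 1⟩ =
      ⟨n + (n+1), fun x => w2 (Fin.cases (motive := fun _ => A)
          (f fun i => (fun kk => Fin.cases (motive := fun _ => A)
            (g fun i' => x (⟨i'.val, by have := i'.isLt; omega⟩ : Fin (n + (n+1) + 1)))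
            (fun j' => x (⟨n + 1 + j'.val, by have := j'.isLt; omega⟩ : Fin (n + (n+1) + 1))) kk)
              (⟨i.val + 1, by have := i.isLt; omega⟩ : Fin (n+2)))
          (fun _ => (fun kk => Fin.cases (motive := fun _ => A)
            (g fun i' => x (⟨i'.val, by have := i'.isLt; omega⟩ : Fin (n + (n+1) + 1)))
            (fun j' => x (⟨n + 1 + j'.val, by have := j'.isLt; omega⟩ : Fin (n + (n+1) + 1))) kk) (0 : Fin (n+2)))),
        fun i => if h : i.val < n + 1 then (1 : S) * 1 else 1⟩ := rfl
  rw [he3] at hco3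
  have hB3 : Mem1 P (n + (n+1)) (fun x => w2 (Fin.cases (motive := fun _ => A)
      (f fun i => x ⟨n + 1 + i.val, by have := i.isLt; omega⟩)
      (fun _ => g fun i => x ⟨i.val, by have := i.isLt; omega⟩))) := by
    refine mem_congr hco3 (funext fun x => congrArg w2 (funext fun kk => ?_))
      (funext fun i => by split <;> simp)
    induction kk using Fin.cases with
    | zero =>
      simp only [Fin.cases_zero]
      refine congrArg f (funext fun i => ?_)
      rw [fin_cases_val _ _ _ i.val rfl i.isLt]
    | succ j =>
      simp only [Fin.cases_succ]
      rw [fin_cases_val0 _ _ _ (by simp)]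
  -- step 4: identify variables
  have hB4 := mem1_minor hP _ hB3
    (fun j : Fin (n + (n+1) + 1) => (⟨j.val % (n+1), Nat.mod_lt _ (by omega)⟩ : Fin (n+1)))
  refine mem1_congr hB4 fun x => congrArg w2 (funext fun kk => ?_)
  induction kk using Fin.cases with
  | zero =>
    simp only [Fin.cases_zero]
    refine congrArg f (funext fun i => congrArg x (Fin.ext ?_))
    show (n + 1 + i.val) % (n+1) = i.val
    rw [Nat.add_mod_left]
    exact Nat.mod_eq_of_lt i.isLt
  | succ j =>
    simp only [Fin.cases_succ]
    refine congrArg g (funext fun i => congrArg x (Fin.ext ?_))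
    show i.val % (n+1) = i.val
    exact Nat.mod_eq_of_lt i.isLt

end ProofComp
section ProofFin

variable {S : Type*} [Monoid S] {k : ℕ} {P : Set (SOp S (Fin (k+2)))}

private lemma one_add_wrap : (1 : Fin (k+2)) + ((k+1 : ℕ) : Fin (k+2)) = 0 := by
  refine Fin.ext ?_
  rw [Fin.val_add, Fin.val_one, Fin.val_cast_of_lt (by omega)]
  rw [show 1 + (k+1) = k+2 by omega]
  simp [Nat.mod_self]

private lemma lt_last_le_k {z : Fin (k+2)} (hz : z ≠ Fin.last (k+1)) :
    z ≤ (⟨k, by omega⟩ : Fin (k+2)) := by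
  have h1 : z.val ≠ k + 1 := fun h => hz (Fin.ext h)
  have h2 := z.isLt
  rw [Fin.le_def]
  show z.val ≤ k
  omega

private lemma k_add_one : (⟨k, by omega⟩ : Fin (k+2)) + 1 = Fin.last (k+1) := by
  refine Fin.ext ?_
  rw [Fin.val_add, Fin.val_one]
  show (k + 1) % (k+2) = k+1
  exact Nat.mod_eq_of_lt (by omega)

variable (hP : IsSPreclone P)
  (hw : Mem1 P 1 (fun x : Fin 2 → Fin (k+2) => max (x 0) (x 1) + 1))
include hP hw

private lemma memW {n : ℕ} {f g : (Fin (n+1) → Fin (k+2)) → Fin (k+2)}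
    (hf : Mem1 P n f) (hg : Mem1 P n g) :
    Mem1 P n (fun x => max (f x) (g x) + 1) := by
  refine mem1_congr (mem1_pointwise hP hw hf hg) fun x => ?_
  show max _ _ + 1 = _
  rw [Fin.cases_zero, fin_cases_val (f x) (fun _ => g x) 1 0 (by decide) (by omega)]

omit hw in
private lemma memU_id : Mem1 P 0 (fun x : Fin 1 → Fin (k+2) => x 0) := mem1_id hP

private lemma memU_suc : Mem1 P 0 (fun x : Fin 1 → Fin (k+2) => x 0 + 1) := by
  refine mem1_congr (mem1_delta hP hw) fun x => ?_
  show max (x 0) (x 0) + 1 = x 0 + 1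
  rw [max_self]

private lemma memU_addc : ∀ c : ℕ, Mem1 P 0 (fun x : Fin 1 → Fin (k+2) => x 0 + (c : Fin (k+2)))
  | 0 => mem1_congr (mem1_id hP) fun x => by rw [Nat.cast_zero, add_zero]
  | c+1 => by
    refine mem1_congr (mem1_comp_unary hP (memU_suc hP hw) (memU_addc c)) fun x => ?_
    show x 0 + (c : Fin (k+2)) + 1 = _
    rw [Nat.cast_add, Nat.cast_one, add_assoc]

private lemma memU_addc' (c : Fin (k+2)) :
    Mem1 P 0 (fun x : Fin 1 → Fin (k+2) => x 0 + c) := by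
  refine mem1_congr (memU_addc hP hw c.val) fun x => ?_
  rw [Fin.cast_val_eq_self]

private lemma memN_join {n : ℕ} {f g : (Fin (n+1) → Fin (k+2)) → Fin (k+2)}
    (hf : Mem1 P n f) (hg : Mem1 P n g) :
    Mem1 P n (fun x => max (f x) (g x)) := by
  have h1 := mem1_comp_unary hP (memU_addc hP hw (k+1)) (memW hP hw hf hg)
  refine mem1_congr h1 fun x => ?_
  show max (f x) (g x) + 1 + ((k+1 : ℕ) : Fin (k+2)) = max (f x) (g x)
  rw [add_assoc, one_add_wrap, add_zero]

private lemma memN_sup' {n : ℕ} {ι : Type*} (s : Finset ι) (hs : s.Nonempty)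
    (F : ι → (Fin (n+1) → Fin (k+2)) → Fin (k+2))
    (hF : ∀ i ∈ s, Mem1 P n (F i)) :
    Mem1 P n (fun x => s.sup' hs (fun i => F i x)) := by
  revert hF
  induction hs using Finset.Nonempty.cons_induction with
  | singleton a =>
    intro hF
    refine mem1_congr (hF a (by simp)) fun x => ?_
    rw [Finset.sup'_singleton]
  | cons a s ha hs ih =>
    intro hF
    have h1 := hF a (by simp)
    have h2 := ih (fun i hi => hF i (by simp [hi]))
    refine mem1_congr (memN_join hP hw h1 h2) fun x => ?_
    rw [Finset.sup'_cons]

private lemma memU_top :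
    Mem1 P 0 (fun _ : Fin 1 → Fin (k+2) => Fin.last (k+1)) := by
  have hsup := memN_sup' hP hw (n := 0) Finset.univ Finset.univ_nonempty
    (fun c : Fin (k+2) => fun x => x 0 + c) (fun c _ => memU_addc' hP hw c)
  refine mem1_congr hsup fun x => ?_
  refine le_antisymm (Finset.sup'_le _ _ fun c _ => Fin.le_last _) ?_
  have h := Finset.le_sup' (fun c : Fin (k+2) => x 0 + c)
    (Finset.mem_univ (Fin.last (k+1) - x 0))
  rwa [add_sub_cancel] at h

private lemma memU_const (b : Fin (k+2)) :
    Mem1 P 0 (fun _ : Fin 1 → Fin (k+2) => b) := by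
  have h1 := mem1_comp_unary hP (memU_addc' hP hw (b + 1)) (memU_top hP hw)
  refine mem1_congr h1 fun x => ?_
  show Fin.last (k+1) + (b + 1) = b
  rw [add_comm b 1, ← add_assoc, Fin.last_add_one, zero_add]

private lemma memU_co (b : Fin (k+2)) :
    Mem1 P 0 (fun x : Fin 1 → Fin (k+2) =>
      if x 0 = b then (0 : Fin (k+2)) else Fin.last (k+1)) := by
  have h1 := memW hP hw (memU_addc' hP hw (Fin.last (k+1) - b))
    (memU_const hP hw ⟨k, by omega⟩)
  refine mem1_congr h1 fun x => ?_
  by_cases hz : x 0 = b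
  · rw [if_pos hz, hz, add_sub_cancel, max_eq_left (Fin.le_last _), Fin.last_add_one]
  · rw [if_neg hz]
    have hne : x 0 + (Fin.last (k+1) - b) ≠ Fin.last (k+1) := by
      intro h
      apply hz
      have h2 : b + (Fin.last (k+1) - b) = Fin.last (k+1) := add_sub_cancel _ _
      exact add_right_cancel (h.trans h2.symm)
    rw [max_eq_right (lt_last_le_k hne), k_add_one]

private lemma memU_psi (c : Fin (k+2)) :
    ∃ φ : Fin (k+2) → Fin (k+2), Mem1 P 0 (fun x => φ (x 0)) ∧
      φ 0 = c ∧ φ (Fin.last (k+1)) = 0 := by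
  refine ⟨fun z => (max (max z (⟨k, by omega⟩ : Fin (k+2)) + 1)
    (Fin.last (k+1) - c) + 1) + c, ?_, ?_, ?_⟩
  · have hmemh : Mem1 P 0 (fun x : Fin 1 → Fin (k+2) =>
        max (x 0) (⟨k, by omega⟩ : Fin (k+2)) + 1) :=
      memW hP hw (memU_id hP) (memU_const hP hw ⟨k, by omega⟩)
    have hmemg : Mem1 P 0 (fun x : Fin 1 → Fin (k+2) =>
        (max (x 0) (Fin.last (k+1) - c) + 1) + c) := by
      have := mem1_comp_unary hP (memU_addc' hP hw c)
        (memW hP hw (memU_id hP) (memU_const hP hw (Fin.last (k+1) - c)))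
      exact mem1_congr this fun x => rfl
    have := mem1_comp_unary hP hmemg hmemh
    exact mem1_congr this fun x => rfl
  · have h0 : max (0 : Fin (k+2)) (⟨k, by omega⟩ : Fin (k+2)) + 1 = Fin.last (k+1) := by
      rw [max_eq_right (Fin.zero_le _), k_add_one]
    show (max (max (0:Fin (k+2)) (⟨k, by omega⟩ : Fin (k+2)) + 1)
      (Fin.last (k+1) - c) + 1) + c = c
    rw [h0, max_eq_left (Fin.le_last _), Fin.last_add_one, zero_add]
  · have hl : max (Fin.last (k+1)) (⟨k, by omega⟩ : Fin (k+2)) + 1 = 0 := by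
      rw [max_eq_left (Fin.le_last _), Fin.last_add_one]
    show (max (max (Fin.last (k+1)) (⟨k, by omega⟩ : Fin (k+2)) + 1)
      (Fin.last (k+1) - c) + 1) + c = 0
    rw [hl, max_eq_right (Fin.zero_le _)]
    have hr : Fin.last (k+1) - c + 1 + c = Fin.last (k+1) + 1 := by ring
    rw [hr, Fin.last_add_one]

private lemma mem1_all (n : ℕ) (f : (Fin (n+1) → Fin (k+2)) → Fin (k+2)) :
    Mem1 P n f := by
  classical
  have hcomem : ∀ (b : Fin (k+2)) (i : Fin (n+1)), Mem1 P n
      (fun x => if x i = b then (0:Fin (k+2)) else Fin.last (k+1)) := by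
    intro b i
    have := mem1_minor hP 0 (memU_co hP hw b) (fun _ : Fin 1 => i)
    exact mem1_congr this fun x => rfl
  obtain ⟨ψ, hψmem, hψ0, hψlast⟩ :
      ∃ ψ : Fin (k+2) → Fin (k+2) → Fin (k+2),
        (∀ c, Mem1 P 0 (fun x => ψ c (x 0))) ∧ (∀ c, ψ c 0 = c) ∧
        (∀ c, ψ c (Fin.last (k+1)) = 0) := by
    choose ψ h1 h2 h3 using fun c => memU_psi hP hw c
    exact ⟨ψ, h1, h2, h3⟩
  have hinnermem : ∀ a : Fin (n+1) → Fin (k+2), Mem1 P n (fun x =>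
      Finset.univ.sup' Finset.univ_nonempty
        (fun i => if x i = a i then (0:Fin (k+2)) else Fin.last (k+1))) := fun a =>
    memN_sup' hP hw Finset.univ Finset.univ_nonempty
      (fun i => fun x => if x i = a i then (0:Fin (k+2)) else Fin.last (k+1))
      (fun i _ => hcomem (a i) i)
  have houter : Mem1 P n (fun x => Finset.univ.sup' Finset.univ_nonempty
      (fun a : Fin (n+1) → Fin (k+2) => ψ (f a) (Finset.univ.sup' Finset.univ_nonempty
        (fun i => if x i = a i then (0:Fin (k+2)) else Fin.last (k+1))))) := by
    refine memN_sup' hP hw Finset.univ Finset.univ_nonempty _ fun a _ => ?_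
    have := mem1_comp_unary hP (hψmem (f a)) (hinnermem a)
    exact mem1_congr this fun x => rfl
  refine mem1_congr houter fun x => ?_
  have hval : ∀ a : Fin (n+1) → Fin (k+2), ψ (f a) (Finset.univ.sup' Finset.univ_nonempty
      (fun i => if x i = a i then (0:Fin (k+2)) else Fin.last (k+1)))
      = if x = a then f x else 0 := by
    intro a
    by_cases hxa : x = a
    · rw [if_pos hxa]
      have h0 : Finset.univ.sup' Finset.univ_nonempty
          (fun i => if x i = a i then (0:Fin (k+2)) else Fin.last (k+1)) = 0 := by
        have hc : ∀ i ∈ Finset.univ, (if x i = a i then (0:Fin (k+2)) else Fin.last (k+1))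
            = (fun _ : Fin (n+1) => (0:Fin (k+2))) i := by
          intro i _
          rw [if_pos (by rw [hxa])]
        rw [Finset.sup'_congr Finset.univ_nonempty rfl hc, Finset.sup'_const]
      rw [h0, hψ0, hxa]
    · rw [if_neg hxa]
      obtain ⟨i₀, hi₀⟩ := Function.ne_iff.mp hxa
      have hlst : Finset.univ.sup' Finset.univ_nonempty
          (fun i => if x i = a i then (0:Fin (k+2)) else Fin.last (k+1))
          = Fin.last (k+1) := by
        refine le_antisymm (Finset.sup'_le _ _ fun i _ => ?_) ?_
        · split
          · exact Fin.zero_le _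
          · exact le_refl _
        · have h := Finset.le_sup'
            (fun i => if x i = a i then (0:Fin (k+2)) else Fin.last (k+1))
            (Finset.mem_univ i₀)
          rwa [if_neg hi₀] at h
      rw [hlst, hψlast]
  rw [Finset.sup'_congr Finset.univ_nonempty rfl (fun a _ => hval a)]
  refine le_antisymm (Finset.sup'_le _ _ fun a _ => ?_) ?_
  · split
    · exact le_refl _
    · exact Fin.zero_le _
  · have h := Finset.le_sup' (fun a : Fin (n+1) → Fin (k+2) => if x = a then f x else 0)
      (Finset.mem_univ x)
    rwa [if_pos rfl] at h

end ProofFin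
section ProofSgn

variable {S A : Type*} [Monoid S] {P : Set (SOp S A)}

private lemma mem_cast {n m : ℕ} (h : n = m) {f : (Fin (n+1) → A) → A} {s : Fin (n+1) → S}
    (hm : (⟨n, f, s⟩ : SOp S A) ∈ P) :
    (⟨m, fun x => f (fun j => x (Fin.cast (by omega) j)),
      fun i => s (Fin.cast (by omega) i)⟩ : SOp S A) ∈ P := by
  subst h
  exact hm

variable (hP : IsSPreclone P)
include hP

private lemma cyc_pow {n : ℕ} {fn : (Fin (n+1) → A) → A} {u : Fin (n+1) → S}
    (h : (⟨n, fn, u⟩ : SOp S A) ∈ P) :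
    ∀ c : ℕ, (⟨n, fun x => fn (fun j => x (j + (c : Fin (n+1)))),
      fun i => u (i - (c : Fin (n+1)))⟩ : SOp S A) ∈ P
  | 0 => by
    refine mem_congr h (funext fun x => congrArg fn (funext fun j => congrArg x ?_))
      (funext fun i => congrArg u ?_)
    · rw [Nat.cast_zero, add_zero]
    · rw [Nat.cast_zero, sub_zero]
  | c+1 => by
    have h2 := hP.2.1 _ (cyc_pow h c)
    refine mem_congr h2 (funext fun x => congrArg fn (funext fun j => congrArg x ?_))
      (funext fun i => congrArg u ?_)
    · show j + (c : Fin (n+1)) + 1 = j + ((c+1 : ℕ) : Fin (n+1))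
      rw [Nat.cast_add, Nat.cast_one, add_assoc]
    · show i - 1 - (c : Fin (n+1)) = i - ((c+1 : ℕ) : Fin (n+1))
      rw [Nat.cast_add, Nat.cast_one, sub_sub, add_comm (1 : Fin (n+1))]

private lemma scale0 {n : ℕ} {fn : (Fin (n+1) → A) → A} {u : Fin (n+1) → S} (s : S)
    (h : (⟨n, fn, u⟩ : SOp S A) ∈ P)
    (hid : (⟨0, fun x => x 0, fun _ => s⟩ : SOp S A) ∈ P) :
    (⟨n, fn, fun i => if i.val = 0 then s * u 0 else u i⟩ : SOp S A) ∈ P := by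
  have hco := hP.2.2.2.2.2 _ h _ hid
  have he : compOp (⟨n, fn, u⟩ : SOp S A) ⟨0, fun x => x 0, fun _ => s⟩ =
      ⟨0 + n, fun x => fn (fun kk => Fin.cases (motive := fun _ => A)
          (x (⟨0, by omega⟩ : Fin (0+n+1)))
          (fun j => x (⟨0 + 1 + j.val, by have := j.isLt; omega⟩ : Fin (0+n+1))) kk),
        fun i => if h : i.val < 0 + 1 then s * u 0
          else u ⟨i.val - 0, by have := i.isLt; omega⟩⟩ := rfl
  rw [he] at hco
  have hcast := mem_cast (Nat.zero_add n) hco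
  refine mem_congr hcast (funext fun x => congrArg fn (funext fun kk => ?_))
    (funext fun i => ?_)
  · induction kk using Fin.cases with
    | zero =>
      rw [Fin.cases_zero]
      exact congrArg x (Fin.ext (by simp))
    | succ j =>
      rw [Fin.cases_succ]
      exact congrArg x (Fin.ext (show 0 + 1 + j.val = j.val + 1 by omega))
  · show (if h : i.val < 0 + 1 then s * u 0
        else u ⟨i.val - 0, by have := i.isLt; omega⟩) = _
    by_cases hi : i.val = 0
    · rw [dif_pos (by omega), if_pos hi]
    · rw [dif_neg (by omega), if_neg hi]
      exact congrArg u (Fin.ext (show i.val - 0 = i.val by omega))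

private lemma scale_at {n : ℕ} {fn : (Fin (n+1) → A) → A} {u : Fin (n+1) → S}
    (i₀ : Fin (n+1)) (s : S)
    (h : (⟨n, fn, u⟩ : SOp S A) ∈ P)
    (hid : (⟨0, fun x => x 0, fun _ => s⟩ : SOp S A) ∈ P) :
    (⟨n, fn, fun i => if i = i₀ then s * u i₀ else u i⟩ : SOp S A) ∈ P := by
  have h1 := cyc_pow hP h (n + 1 - i₀.val)
  have h2 := scale0 hP s h1 hid
  have h3 := cyc_pow hP h2 i₀.val
  have hc2 : ((i₀.val : ℕ) : Fin (n+1)) = i₀ := Fin.cast_val_eq_self i₀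
  have hadd : i₀ + ((n + 1 - i₀.val : ℕ) : Fin (n+1)) = 0 := by
    have hx : ((i₀.val + (n + 1 - i₀.val) : ℕ) : Fin (n+1)) = 0 := by
      rw [show i₀.val + (n + 1 - i₀.val) = n + 1 from by have := i₀.isLt; omega,
        Fin.natCast_self]
    rw [Nat.cast_add, Fin.cast_val_eq_self] at hx
    exact hx
  have hc1 : ((n + 1 - i₀.val : ℕ) : Fin (n+1)) = -i₀ := eq_neg_of_add_eq_zero_right hadd
  refine mem_congr h3 (funext fun x => congrArg fn (funext fun j => congrArg x ?_))
    (funext fun i => ?_)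
  · rw [add_assoc, hc1, hc2, neg_add_cancel, add_zero]
  · rw [hc1, hc2]
    by_cases hi : i = i₀
    · have hv0 : (i - i₀).val = 0 := by rw [hi, sub_self, Fin.val_zero]
      rw [if_pos hv0, if_pos hi, zero_sub, neg_neg]
    · have hvne : ¬ (i - i₀).val = 0 := by
        intro h0
        exact hi (sub_eq_zero.mp (Fin.ext (by rw [h0, Fin.val_zero])))
      rw [if_neg hvne, if_neg hi, sub_neg_eq_add, sub_add_cancel]

private lemma build_sgn {n : ℕ} {fn : (Fin (n+1) → A) → A} (t : Fin (n+1) → S)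
    (h1 : (⟨n, fn, fun _ => (1:S)⟩ : SOp S A) ∈ P)
    (hid : ∀ s : S, (⟨0, fun x => x 0, fun _ => s⟩ : SOp S A) ∈ P) :
    (⟨n, fn, t⟩ : SOp S A) ∈ P := by
  have key : ∀ c : ℕ, c ≤ n + 1 →
      (⟨n, fn, fun i => if i.val < c then t i else 1⟩ : SOp S A) ∈ P := by
    intro c
    induction c with
    | zero =>
      intro _
      exact mem_congr h1 rfl (funext fun i => by rw [if_neg (by omega)])
    | succ c ih =>
      intro hc
      have h2 := scale_at hP (⟨c, by omega⟩ : Fin (n+1)) (t ⟨c, by omega⟩)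
        (ih (by omega)) (hid _)
      refine mem_congr h2 rfl (funext fun i => ?_)
      by_cases hi : i = (⟨c, by omega⟩ : Fin (n+1))
      · subst hi
        rw [if_pos rfl, if_neg (show ¬ ((⟨c, by omega⟩ : Fin (n+1))).val < c by
            show ¬ c < c; omega), mul_one,
          if_pos (show ((⟨c, by omega⟩ : Fin (n+1))).val < c + 1 by show c < c+1; omega)]
      · rw [if_neg hi]
        have hvc : i.val ≠ c := fun h => hi (Fin.ext h)
        by_cases hlt : i.val < c
        · rw [if_pos hlt, if_pos (by omega)]
        · rw [if_neg hlt, if_neg (by omega)]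
  exact mem_congr (key (n+1) (le_refl _)) rfl (funext fun i => if_pos i.isLt)

end ProofSgn

/-- The full `S`-preclone on `A = {0,…,k−1}` (`k ≥ 2`) is finitely generated:
`SOp(A) = ⟨{m^{(e,e)}} ∪ {id^s ∣ s ∈ S}⟩_S`, where `m(x,y) = max(x,y) ⊕ 1`
(addition modulo `k`) carries signum `(e,e)`. -/
theorem SOp_finitely_generated {S : Type*} [Monoid S] [Fintype S] (k : ℕ) :
    SSg (({⟨1, fun x => max (x 0) (x 1) + 1, fun _ => 1⟩} :
        Set (SOp S (Fin (k + 2)))) ∪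
      { f : SOp S (Fin (k + 2)) | ∃ s : S, f = ⟨0, fun x => x 0, fun _ => s⟩ }) =
      (Set.univ : Set (SOp S (Fin (k + 2)))) := by
  apply Set.eq_univ_of_forall
  intro f
  refine Set.mem_sInter.mpr ?_
  rintro Q ⟨hQpre, hQsub⟩
  obtain ⟨n, fn, sgn⟩ := f
  have hw : Mem1 Q 1 (fun x : Fin 2 → Fin (k+2) => max (x 0) (x 1) + 1) :=
    hQsub (Or.inl rfl)
  have hid : ∀ s : S, (⟨0, fun x => x 0, fun _ => s⟩ : SOp S (Fin (k+2))) ∈ Q :=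
    fun s => hQsub (Or.inr ⟨s, rfl⟩)
  exact build_sgn hQpre sgn (mem1_all hQpre hw n fn) hid
end SPreclone
end

section
/- Let S be a finite monoid and A = {0, 1, …, k−1} with k ≥ 3. The full S-relational clone SRel(A) is finitely generated: SRel(A) = [ { (Δ_A, ∇_A, …, ∇_A), (≤, ≤, …, ≤), (≠, ≠, …, ≠) } ]_S, where (σ, σ', …, σ') denotes the binary S-relation ρ with ρ_e = σ and ρ_s = σ' for all s ∈ S \ {e}, Δ_A := {(x,x) : x ∈ A}, ∇_A := A², ≤ is the natural linear order on A, and ≠ := {(x,y) ∈ A² : x ≠ y}. -/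
namespace SPreclone

/-! ### Auxiliary development -/

section Aux
set_option linter.unusedSectionVars false

variable {S : Type*} [Monoid S] {k : ℕ}

local notation "AA" => Fin (k + 3)

variable {R : Set (SRel S (Fin (k + 3)))}

private lemma srel_eq {m : ℕ} {r r' : S → Set (Fin (m + 1) → AA)}
    (h : ∀ s, r s = r' s) : (⟨m, r⟩ : SRel S AA) = ⟨m, r'⟩ := by
  have : r = r' := funext h
  rw [this]

/-- Binary intersection at equal arity. -/
private lemma inter_mem (hR : IsSRelClone R) {m : ℕ}
    {r r' : S → Set (Fin (m + 1) → AA)}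
    (h1 : (⟨m, r⟩ : SRel S AA) ∈ R) (h2 : (⟨m, r'⟩ : SRel S AA) ∈ R) :
    (⟨m, fun s => r s ∩ r' s⟩ : SRel S AA) ∈ R := by
  have h3 := hR.2.2.2.2.2.1 _ h1 _ h2
  have he : interRel (⟨m, r⟩ : SRel S AA) ⟨m, r'⟩ = ⟨m, fun s => r s ∩ r' s⟩ := by
    unfold interRel
    rw [dif_pos rfl]
    apply srel_eq
    intro s; ext a
    have hc : ∀ (h : m + 1 = m + 1) (i : Fin (m + 1)), Fin.cast h i = i :=
      fun h i => Fin.ext rfl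
    simp only [Set.mem_setOf_eq, hc, Set.mem_inter_iff]
  rw [he] at h3; exact h3

/-- The full relation of every arity. -/
private lemma full_mem (hR : IsSRelClone R)
    (hle : (⟨1, fun _ => { a | a 0 ≤ a 1 }⟩ : SRel S AA) ∈ R) :
    ∀ m : ℕ, (⟨m, fun _ => (Set.univ : Set (Fin (m + 1) → AA))⟩ : SRel S AA) ∈ R := by
  have h0 : (⟨0, fun _ => (Set.univ : Set (Fin 1 → AA))⟩ : SRel S AA) ∈ R := by
    have h1 := hR.2.2.2.1 _ hle
    have he : prRel (⟨1, fun _ => { a | a 0 ≤ a 1 }⟩ : SRel S AA)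
        = ⟨0, fun _ => (Set.univ : Set (Fin 1 → AA))⟩ := by
      show (⟨0, fun _ => { b | ∃ a ∈ { a : Fin 2 → AA | a 0 ≤ a 1 }, b = fun j => a j.succ }⟩ : SRel S AA) = _
      apply srel_eq
      intro s; ext b
      simp only [Set.mem_setOf_eq, Set.mem_univ, iff_true]
      refine ⟨fun i => if i = 0 then 0 else b 0, by simp [Fin.zero_le], ?_⟩
      · funext j
        have : (j : Fin (0+1)) = 0 := Fin.ext (by have := j.isLt; omega)
        simp [this]
    rw [he] at h1; exact h1
  intro m
  induction m with
  | zero => exact h0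
  | succ n ih =>
    have h2 := hR.2.2.2.2.1 _ ih _ h0
    have he : prodRel (⟨n, fun _ => (Set.univ : Set (Fin (n + 1) → AA))⟩ : SRel S AA)
        ⟨0, fun _ => (Set.univ : Set (Fin 1 → AA))⟩
        = ⟨n + 1, fun _ => (Set.univ : Set (Fin (n + 2) → AA))⟩ := by
      apply srel_eq; intro s; ext c; simp [prodRel]
    rw [he] at h2; exact h2

/-- Reindexing along a permutation of the coordinates. -/
private lemma perm_mem (hR : IsSRelClone R) {m : ℕ}
    (π : Equiv.Perm (Fin (m + 1))) {r : S → Set (Fin (m + 1) → AA)}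
    (hr : (⟨m, r⟩ : SRel S AA) ∈ R) :
    (⟨m, fun s => { b | (fun i => b (π i)) ∈ r s }⟩ : SRel S AA) ∈ R := by
  cases m with
  | zero =>
    have he : (fun s => { b : Fin 1 → AA | (fun i => b (π i)) ∈ r s }) = r := by
      funext s; ext b
      have hπ : ∀ i : Fin 1, π i = i := by
        intro i
        apply Fin.ext
        have h1 := (π i).isLt
        have h2 := i.isLt
        omega
      simp only [Set.mem_setOf_eq, hπ]
    rw [he]; exact hr
  | succ n =>
    set H : Set (Equiv.Perm (Fin (n + 2))) :=
      { π | ∀ r : S → Set (Fin (n + 2) → AA), (⟨n + 1, r⟩ : SRel S AA) ∈ R →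
          (⟨n + 1, fun s => { b | (fun i => b (π i)) ∈ r s }⟩ : SRel S AA) ∈ R } with hH
    suffices hmem : π ∈ H by exact hmem r hr
    have hone : (1 : Equiv.Perm (Fin (n + 2))) ∈ H := by
      intro r hr
      have he : (fun s => { b : Fin (n+2) → AA | (fun i => b ((1 : Equiv.Perm (Fin (n+2))) i)) ∈ r s }) = r := by
        funext s; ext b; simp
      rw [he]; exact hr
    have hmul : ∀ πa πb : Equiv.Perm (Fin (n+2)), πa ∈ H → πb ∈ H → πa * πb ∈ H := by
      intro πa πb ha hb r hr
      have h2 := ha _ (hb r hr)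
      have he : (⟨n + 1, fun s => { b : Fin (n+2) → AA |
          (fun i => b (πa i)) ∈ { c : Fin (n+2) → AA | (fun i => c (πb i)) ∈ r s } }⟩ : SRel S AA)
          = ⟨n + 1, fun s => { b | (fun i => b ((πa * πb) i)) ∈ r s }⟩ := by
        apply srel_eq; intro s; ext b
        simp [Equiv.Perm.mul_apply]
      rw [he] at h2; exact h2
    have hpow : ∀ (t : ℕ) (πa : Equiv.Perm (Fin (n+2))), πa ∈ H → πa ^ t ∈ H := by
      intro t πa ha
      induction t with
      | zero => simpa using hone
      | succ t ih => rw [pow_succ]; exact hmul _ _ ih ha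
    have hinv : ∀ πa : Equiv.Perm (Fin (n+2)), πa ∈ H → πa⁻¹ ∈ H := by
      intro πa ha
      have ho : 0 < orderOf πa := orderOf_pos πa
      have h1 : πa * πa ^ (orderOf πa - 1) = 1 := by
        rw [← pow_succ', Nat.sub_add_cancel ho]
        exact pow_orderOf_eq_one πa
      have h2 : πa ^ (orderOf πa - 1) = πa⁻¹ := eq_inv_of_mul_eq_one_right h1
      rw [← h2]; exact hpow _ _ ha
    set σ : Equiv.Perm (Fin (n+2)) := Equiv.subRight (1 : Fin (n+2)) with hσdef
    have hcycm : σ ∈ H := by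
      intro r hr
      have h1 := hR.2.1 _ hr
      have he : cycRel (⟨n + 1, r⟩ : SRel S AA)
          = ⟨n + 1, fun s => { b | (fun i => b ((Equiv.subRight (1 : Fin (n+2))) i)) ∈ r s }⟩ := by
        apply srel_eq; intro s; ext b; simp [cycRel, Equiv.subRight_apply]
      rw [he] at h1; exact h1
    have hswap : Equiv.swap (0 : Fin (n+2)) 1 ∈ H := by
      intro r hr
      have h1 := hR.2.2.1 _ hr
      have he : swapRel (⟨n + 1, r⟩ : SRel S AA)
          = ⟨n + 1, fun s => { b | (fun i => b ((Equiv.swap (0 : Fin (n+2)) 1) i)) ∈ r s }⟩ := by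
        apply srel_eq; intro s; ext b; simp [swapRel]
      rw [he] at h1; exact h1
    -- the cycle
    have hσeq : σ = (finRotate (n+2))⁻¹ := by
      apply Equiv.ext
      intro x
      rw [hσdef, Equiv.subRight_apply, eq_comm, Equiv.Perm.inv_eq_iff_eq,
        finRotate_succ_apply, sub_add_cancel]
    have hcyc : σ.IsCycle := by
      rw [hσeq]; exact (isCycle_finRotate).inv
    have hsup : σ.support = Finset.univ := by
      rw [hσeq, Equiv.Perm.support_inv, support_finRotate]
    have hclos := Equiv.Perm.closure_cycle_adjacent_swap hcyc hsup 1
    have hσ1 : σ 1 = 0 := by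
      rw [hσdef, Equiv.subRight_apply, sub_self]
    have hπT : π ∈ Subgroup.closure {σ, Equiv.swap 1 (σ 1)} := by
      rw [hclos]; trivial
    refine Subgroup.closure_induction ?_ hone (fun x y _ _ hx hy => hmul x y hx hy)
      (fun x _ hx => hinv x hx) hπT
    intro x hx
    rcases hx with h | h
    · rw [h]; exact hcycm
    · rw [h, hσ1]
      rw [Equiv.swap_comm]
      exact hswap

/-- Deleting the first `t` coordinates. -/
private lemma dropFront (hR : IsSRelClone R) :
    ∀ (t u : ℕ) (r : S → Set (Fin (u + t + 1) → AA)),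
    (⟨u + t, r⟩ : SRel S AA) ∈ R →
    (⟨u, fun s => { b | ∃ a ∈ r s, b = fun j : Fin (u + 1) =>
        a ⟨t + j.val, by omega⟩ }⟩ : SRel S AA) ∈ R := by
  intro t
  induction t with
  | zero =>
    intro u r hr
    have he : (fun s => { b : Fin (u+1) → AA | ∃ a ∈ r s, b = fun j : Fin (u + 1) =>
        a ⟨0 + j.val, by omega⟩ }) = r := by
      funext s; ext b
      constructor
      · rintro ⟨a, ha, rfl⟩
        have h5 : (fun j : Fin (u+1) => a ⟨0 + j.val, by omega⟩) = a :=
          funext fun j => congrArg a (Fin.ext (Nat.zero_add j.val))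
        rw [h5]; exact ha
      · intro hb
        refine ⟨b, hb, ?_⟩
        exact (funext fun j => congrArg b (Fin.ext (Nat.zero_add j.val))).symm
    rw [he]; exact hr
  | succ t ih =>
    intro u r hr
    have h1 : (⟨u + t, fun s => { b : Fin (u + t + 1) → AA |
        ∃ a ∈ r s, b = fun j => a j.succ }⟩ : SRel S AA) ∈ R := hR.2.2.2.1 _ hr
    have h2 := ih u _ h1
    have he : (⟨u, fun s => { b : Fin (u+1) → AA |
        ∃ c ∈ { b : Fin (u + t + 1) → AA | ∃ a ∈ r s, b = fun j => a j.succ },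
          b = fun j : Fin (u+1) => c ⟨t + j.val, by omega⟩ }⟩ : SRel S AA)
        = ⟨u, fun s => { b | ∃ a ∈ r s, b = fun j : Fin (u + 1) =>
            a ⟨t + 1 + j.val, by omega⟩ }⟩ := by
      apply srel_eq; intro s; ext b
      simp only [Set.mem_setOf_eq]
      constructor
      · rintro ⟨c, ⟨a, ha, rfl⟩, rfl⟩
        refine ⟨a, ha, ?_⟩
        funext j
        show a (Fin.succ _) = _
        congr 1
        exact Fin.ext (by simp only [Fin.val_succ]; try omega)
      · rintro ⟨a, ha, rfl⟩
        refine ⟨fun j => a j.succ, ⟨a, ha, rfl⟩, ?_⟩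
        funext j
        show _ = a (Fin.succ _)
        congr 1
        exact Fin.ext (by simp only [Fin.val_succ]; try omega)
    rw [he] at h2; exact h2

/-- Transport along an equality of arities. -/
private lemma cast_mem (hR : IsSRelClone R) {m m' : ℕ} (h : m = m')
    {r : S → Set (Fin (m + 1) → AA)} (hr : (⟨m, r⟩ : SRel S AA) ∈ R) :
    (⟨m', fun s => { b : Fin (m' + 1) → AA |
        (fun i : Fin (m + 1) => b (Fin.cast (by omega) i)) ∈ r s }⟩ : SRel S AA) ∈ R := by
  subst h
  have he : (fun s => { b : Fin (m + 1) → AA |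
      (fun i : Fin (m + 1) => b (Fin.cast (by omega : m + 1 = m + 1) i)) ∈ r s }) = r := by
    funext s; ext b
    have : (fun i : Fin (m + 1) => b (Fin.cast (by omega : m + 1 = m + 1) i)) = b := by
      funext i; exact congrArg b (Fin.ext rfl)
    simp only [Set.mem_setOf_eq, this]
  rw [he]; exact hr

/-- Moving an equality constraint to arbitrary distinct coordinates. -/
private lemma eq_move (hR : IsSRelClone R) {M : ℕ} {p q : Fin (M + 1)} (hpq : p ≠ q)
    (hbase : (⟨M, fun _ => { c : Fin (M + 1) → AA | c p = c q }⟩ : SRel S AA) ∈ R)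
    (i j : Fin (M + 1)) (hij : i ≠ j) :
    (⟨M, fun _ => { c : Fin (M + 1) → AA | c i = c j }⟩ : SRel S AA) ∈ R := by
  set τ : Equiv.Perm (Fin (M + 1)) := Equiv.swap p i with hτ
  set j' : Fin (M + 1) := τ j with hj'def
  have hj'p : j' ≠ p := by
    intro h
    apply hij
    have h2 := congrArg τ h
    rw [hj'def, hτ, Equiv.swap_apply_self, Equiv.swap_apply_left] at h2
    exact h2.symm ▸ rfl
  set π : Equiv.Perm (Fin (M + 1)) := (Equiv.swap q j').trans τ with hπ
  have hπp : π p = i := by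
    rw [hπ]
    have h3 : Equiv.swap q j' p = p :=
      Equiv.swap_apply_of_ne_of_ne hpq (Ne.symm hj'p)
    simp only [Equiv.trans_apply, h3, hτ, Equiv.swap_apply_left]
  have hπq : π q = j := by
    rw [hπ]
    simp only [Equiv.trans_apply, Equiv.swap_apply_left, hj'def, hτ, Equiv.swap_apply_self]
  have h3 := perm_mem hR π hbase
  have he : (⟨M, fun s => { b : Fin (M + 1) → AA |
      (fun x => b (π x)) ∈ { c : Fin (M + 1) → AA | c p = c q } }⟩ : SRel S AA)
      = ⟨M, fun _ => { c : Fin (M + 1) → AA | c i = c j }⟩ := by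
    apply srel_eq; intro s; ext b
    simp only [Set.mem_setOf_eq, hπp, hπq]
  rw [he] at h3; exact h3

/-- The equality relation between two distinct coordinates. -/
private lemma eqAt_mem (hR : IsSRelClone R)
    (hle : (⟨1, fun _ => { a | a 0 ≤ a 1 }⟩ : SRel S AA) ∈ R) :
    ∀ (N : ℕ) (i j : Fin (N + 1 + 1)), i ≠ j →
    (⟨N + 1, fun _ => { c : Fin (N + 1 + 1) → AA | c i = c j }⟩ : SRel S AA) ∈ R := by
  intro N i j hij
  cases N with
  | zero =>
    have h01 : (0 : Fin 2) ≠ 1 := by decide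
    have hdel : (⟨1, fun _ => { c : Fin 2 → AA | c 0 = c 1 }⟩ : SRel S AA) ∈ R := hR.1
    exact eq_move hR h01 hdel i j hij
  | succ N' =>
    set p : Fin (N' + 1 + 1 + 1) := ⟨N' + 1, by omega⟩ with hp
    set q : Fin (N' + 1 + 1 + 1) := ⟨N' + 2, by omega⟩ with hq
    have hpq : p ≠ q := Fin.ne_of_val_ne (show N' + 1 ≠ N' + 2 by omega)
    have h1 := hR.2.2.2.2.1 _ (full_mem hR hle N') _ hR.1
    have h1' : (⟨N' + 1 + 1, (prodRel (⟨N', fun _ => (Set.univ : Set (Fin (N' + 1) → AA))⟩ : SRel S AA) (deltaS S AA)).rel⟩ : SRel S AA) ∈ R := h1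
    have he : (⟨N' + 1 + 1, (prodRel (⟨N', fun _ => (Set.univ : Set (Fin (N' + 1) → AA))⟩ : SRel S AA) (deltaS S AA)).rel⟩ : SRel S AA)
        = ⟨N' + 1 + 1, fun _ => { c : Fin (N' + 1 + 1 + 1) → AA | c p = c q }⟩ := by
      apply srel_eq; intro s; ext c
      simp only [prodRel, deltaS, Set.mem_setOf_eq, Set.mem_univ, true_and, hp, hq]
      constructor
      · intro h
        change _ = _ at h ⊢
        convert h using 2 <;> exact Fin.ext (by simp)
      · intro h
        change _ = _ at h ⊢
        convert h using 2 <;> exact Fin.ext (by simp)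
    rw [he] at h1'
    exact eq_move hR hpq h1' i j hij

private lemma mem_congr_s16 {X Y : SRel S AA} (h : X = Y) (hX : X ∈ R) : Y ∈ R := h ▸ hX

/-- Finite intersections at a fixed arity. -/
private lemma finInter_mem (hR : IsSRelClone R)
    (hle : (⟨1, fun _ => { a | a 0 ≤ a 1 }⟩ : SRel S AA) ∈ R) {m : ℕ}
    {ι : Type*} [DecidableEq ι] (I : Finset ι)
    (g : ι → (S → Set (Fin (m + 1) → AA)))
    (hg : ∀ i ∈ I, (⟨m, g i⟩ : SRel S AA) ∈ R) :
    (⟨m, fun s => ⋂ i ∈ I, g i s⟩ : SRel S AA) ∈ R := by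
  induction I using Finset.induction_on with
  | empty =>
    have he : (⟨m, fun _ => (Set.univ : Set (Fin (m + 1) → AA))⟩ : SRel S AA)
        = ⟨m, fun s => ⋂ i ∈ (∅ : Finset ι), g i s⟩ := by
      apply srel_eq; intro s; simp
    exact mem_congr_s16 he (full_mem hR hle m)
  | insert a I' ha ih =>
    have h1 := inter_mem hR (hg a (Finset.mem_insert_self a I'))
      (ih (fun i hi => hg i (Finset.mem_insert_of_mem hi)))
    have he : (⟨m, fun s => g a s ∩ ⋂ i ∈ I', g i s⟩ : SRel S AA)
        = ⟨m, fun s => ⋂ i ∈ insert a I', g i s⟩ := by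
      apply srel_eq; intro s
      rw [Finset.set_biInter_insert]
    exact mem_congr_s16 he h1

/-- Intersections of arbitrary (automatically finite) families of constant relations. -/
private lemma sInterConst_mem (hR : IsSRelClone R)
    (hle : (⟨1, fun _ => { a | a 0 ≤ a 1 }⟩ : SRel S AA) ∈ R) {m : ℕ}
    (G : Set (Set (Fin (m + 1) → AA)))
    (hG : ∀ g ∈ G, (⟨m, fun _ => g⟩ : SRel S AA) ∈ R) :
    (⟨m, fun _ => ⋂₀ G⟩ : SRel S AA) ∈ R := by
  classical
  have hfin : G.Finite := Set.toFinite G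
  have h1 := finInter_mem hR hle hfin.toFinset (fun g => (fun _ => g))
    (fun g hg' => hG g (hfin.mem_toFinset.mp hg'))
  have he : (⟨m, fun s => ⋂ g ∈ hfin.toFinset, g⟩ : SRel S AA)
      = ⟨m, fun _ => ⋂₀ G⟩ := by
    apply srel_eq; intro s; ext x
    simp only [Set.mem_iInter, Set.mem_sInter, hfin.mem_toFinset]
  exact mem_congr_s16 he h1

/-- Pullback (inverse image) of a relation along an arbitrary map of coordinates. -/
private lemma pull_mem (hR : IsSRelClone R)
    (hle : (⟨1, fun _ => { a | a 0 ≤ a 1 }⟩ : SRel S AA) ∈ R) {m M : ℕ}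
    (f : Fin (m + 1) → Fin (M + 1)) {r : S → Set (Fin (m + 1) → AA)}
    (hr : (⟨m, r⟩ : SRel S AA) ∈ R) :
    (⟨M, fun s => { b : Fin (M + 1) → AA | (fun i => b (f i)) ∈ r s }⟩ : SRel S AA) ∈ R := by
  classical
  have h1 := hR.2.2.2.2.1 _ hr _ (full_mem hR hle M)
  have h1' : (⟨m + M + 1, (prodRel (⟨m, r⟩ : SRel S AA) (⟨M, fun _ => (Set.univ : Set (Fin (M+1) → AA))⟩ : SRel S AA)).rel⟩ : SRel S AA) ∈ R := h1
  -- equality constraints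
  set E : Fin (m + 1) → (S → Set (Fin (m + M + 1 + 1) → AA)) := fun j =>
    (fun _ => { c : Fin (m + M + 1 + 1) → AA |
      c ⟨j.val, by omega⟩ = c ⟨m + 1 + (f j).val, by have := (f j).isLt; omega⟩ }) with hE
  have hEmem : ∀ j : Fin (m + 1), (⟨m + M + 1, E j⟩ : SRel S AA) ∈ R := by
    intro j
    apply eqAt_mem hR hle (m + M)
    intro hcon
    have := congrArg Fin.val hcon
    simp only [] at this
    omega
  have h3 := finInter_mem hR hle Finset.univ E (fun j _ => hEmem j)
  have h4 := inter_mem hR h1' h3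
  have h5 := cast_mem hR (show m + M + 1 = M + (m + 1) by omega) h4
  have h6 := dropFront hR (m + 1) M _ h5
  refine mem_congr_s16 (srel_eq fun s => ?_) h6
  ext b
  simp only [Set.mem_setOf_eq, Set.mem_inter_iff, Set.mem_iInter, Finset.mem_univ,
    true_implies, prodRel, Set.mem_univ, and_true, hE]
  constructor
  · rintro ⟨a, ⟨hfront, hconstr⟩, rfl⟩
    have hkey : (fun i : Fin (m+1) => (fun j : Fin (M+1) =>
        a ⟨m + 1 + j.val, by have := j.isLt; omega⟩) (f i))
        = (fun i : Fin (m+1) => a (Fin.cast (by omega : m + M + 1 + 1 = M + (m+1) + 1)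
            ⟨i.val, by have := i.isLt; omega⟩)) := by
      funext i
      exact (hconstr i).symm
    rw [hkey]
    exact hfront
  · intro hb
    set A : Fin (M + (m+1) + 1) → AA := fun x =>
      if h : x.val < m + 1 then b (f ⟨x.val, h⟩)
      else b ⟨x.val - (m+1), by have := x.isLt; omega⟩ with hA
    have hav1 : ∀ (x : Fin (M + (m+1) + 1)) (h : x.val < m + 1), A x = b (f ⟨x.val, h⟩) :=
      fun x h => dif_pos h
    have hav2 : ∀ (x : Fin (M + (m+1) + 1)) (h : ¬ x.val < m + 1),
        A x = b ⟨x.val - (m+1), by have := x.isLt; omega⟩ :=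
      fun x h => dif_neg h
    refine ⟨A, ⟨?_, ?_⟩, ?_⟩
    · have h7 : (fun i : Fin (m+1) => A (Fin.cast (by omega : m + M + 1 + 1 = M + (m+1) + 1)
          ⟨i.val, by have := i.isLt; omega⟩)) = fun i => b (f i) := by
        funext i
        rw [hav1 _ (show ((Fin.cast (by omega : m + M + 1 + 1 = M + (m+1) + 1)
          ⟨i.val, by have := i.isLt; omega⟩ : Fin (M + (m+1) + 1))).val < m + 1 from i.isLt)]
        exact congrArg b (congrArg f (Fin.ext rfl))
      rw [h7]
      exact hb
    · intro j
      rw [hav1 _ (show ((Fin.cast (by omega : m + M + 1 + 1 = M + (m+1) + 1)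
          ⟨j.val, by have := j.isLt; omega⟩ : Fin (M + (m+1) + 1))).val < m + 1 from j.isLt)]
      rw [hav2 _ (show ¬ ((Fin.cast (by omega : m + M + 1 + 1 = M + (m+1) + 1)
          ⟨m + 1 + (f j).val, by have := (f j).isLt; omega⟩ : Fin (M + (m+1) + 1))).val < m + 1
          from by simp only [Fin.coe_cast]; omega)]
      have e1 : f ⟨((Fin.cast (by omega : m + M + 1 + 1 = M + (m+1) + 1)
          ⟨j.val, by have := j.isLt; omega⟩ : Fin (M + (m+1) + 1))).val, j.isLt⟩ = f j :=
        congrArg f (Fin.ext rfl)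
      rw [e1]
      exact congrArg b (Fin.ext (by simp only [Fin.coe_cast]; omega))
    · funext j
      rw [hav2 _ (show ¬ ((⟨m + 1 + j.val, by have := j.isLt; omega⟩ : Fin (M + (m+1) + 1))).val < m + 1
          from by show ¬ (m + 1 + j.val < m + 1); omega)]
      exact congrArg b (Fin.ext (by show (j : ℕ) = m + 1 + (j : ℕ) - (m + 1); omega))

/-- Pushforward (image) of a relation along an arbitrary map of coordinates. -/
private lemma push_mem (hR : IsSRelClone R)
    (hle : (⟨1, fun _ => { a | a 0 ≤ a 1 }⟩ : SRel S AA) ∈ R) {m t : ℕ}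
    (g : Fin (t + 1) → Fin (m + 1)) {r : S → Set (Fin (m + 1) → AA)}
    (hr : (⟨m, r⟩ : SRel S AA) ∈ R) :
    (⟨t, fun s => { b : Fin (t + 1) → AA | ∃ a ∈ r s, b = fun j => a (g j) }⟩ : SRel S AA) ∈ R := by
  classical
  have h1 := pull_mem hR hle
    (fun i : Fin (m + 1) => (⟨i.val, by have := i.isLt; omega⟩ : Fin (m + t + 1 + 1))) hr
  set E : Fin (t + 1) → (S → Set (Fin (m + t + 1 + 1) → AA)) := fun j =>
    (fun _ => { c : Fin (m + t + 1 + 1) → AA |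
      c ⟨(g j).val, by have := (g j).isLt; omega⟩ = c ⟨m + 1 + j.val, by have := j.isLt; omega⟩ }) with hE
  have hEmem : ∀ j : Fin (t + 1), (⟨m + t + 1, E j⟩ : SRel S AA) ∈ R := by
    intro j
    apply eqAt_mem hR hle (m + t)
    intro hcon
    have := congrArg Fin.val hcon
    simp only [] at this
    have := (g j).isLt
    omega
  have h3 := finInter_mem hR hle Finset.univ E (fun j _ => hEmem j)
  have h4 := inter_mem hR h1 h3
  have h5 := cast_mem hR (show m + t + 1 = t + (m + 1) by omega) h4
  have h6 := dropFront hR (m + 1) t _ h5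
  refine mem_congr_s16 (srel_eq fun s => ?_) h6
  ext b
  simp only [Set.mem_setOf_eq, Set.mem_inter_iff, Set.mem_iInter, Finset.mem_univ,
    true_implies, hE]
  constructor
  · rintro ⟨a, ⟨hfront, hconstr⟩, rfl⟩
    refine ⟨fun i : Fin (m+1) => a (Fin.cast (by omega : m + t + 1 + 1 = t + (m+1) + 1)
      ⟨i.val, by have := i.isLt; omega⟩), hfront, ?_⟩
    funext j
    exact (hconstr j).symm
  · rintro ⟨a0, ha0, rfl⟩
    set A : Fin (t + (m+1) + 1) → AA := fun x =>
      if h : x.val < m + 1 then a0 ⟨x.val, h⟩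
      else a0 (g ⟨x.val - (m+1), by have := x.isLt; omega⟩) with hA
    have hav1 : ∀ (x : Fin (t + (m+1) + 1)) (h : x.val < m + 1), A x = a0 ⟨x.val, h⟩ :=
      fun x h => dif_pos h
    have hav2 : ∀ (x : Fin (t + (m+1) + 1)) (h : ¬ x.val < m + 1),
        A x = a0 (g ⟨x.val - (m+1), by have := x.isLt; omega⟩) :=
      fun x h => dif_neg h
    refine ⟨A, ⟨?_, ?_⟩, ?_⟩
    · have h7 : (fun i : Fin (m+1) => A (Fin.cast (by omega : m + t + 1 + 1 = t + (m+1) + 1)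
          ⟨i.val, by have := i.isLt; omega⟩)) = a0 := by
        funext i
        rw [hav1 _ (show ((Fin.cast (by omega : m + t + 1 + 1 = t + (m+1) + 1)
          ⟨i.val, by have := i.isLt; omega⟩ : Fin (t + (m+1) + 1))).val < m + 1 from i.isLt)]
        exact congrArg a0 (Fin.ext rfl)
      rw [h7]
      exact ha0
    · intro j
      rw [hav1 _ (show ((Fin.cast (by omega : m + t + 1 + 1 = t + (m+1) + 1)
          ⟨(g j).val, by have := (g j).isLt; omega⟩ : Fin (t + (m+1) + 1))).val < m + 1 from (g j).isLt)]
      rw [hav2 _ (show ¬ ((Fin.cast (by omega : m + t + 1 + 1 = t + (m+1) + 1)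
          ⟨m + 1 + j.val, by have := j.isLt; omega⟩ : Fin (t + (m+1) + 1))).val < m + 1
          from by simp only [Fin.coe_cast]; omega)]
      have e1 : g ⟨((Fin.cast (by omega : m + t + 1 + 1 = t + (m+1) + 1)
          ⟨m + 1 + j.val, by have := j.isLt; omega⟩ : Fin (t + (m+1) + 1))).val - (m+1),
          by simp only [Fin.coe_cast]; have := j.isLt; omega⟩ = g j :=
        congrArg g (Fin.ext (by simp only [Fin.coe_cast]; show m + 1 + j.val - (m+1) = j.val; omega))
      rw [e1]
      exact congrArg a0 (Fin.ext rfl)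
    · funext j
      rw [hav2 _ (show ¬ ((⟨m + 1 + j.val, by have := j.isLt; omega⟩ : Fin (t + (m+1) + 1))).val < m + 1
          from by show ¬ (m + 1 + j.val < m + 1); omega)]
      exact congrArg a0 (congrArg g (Fin.ext (by show (j : ℕ) = m + 1 + (j : ℕ) - (m + 1); omega)))

open Classical in
/-- Two-level tuple: `b` on `T`, `a` elsewhere. -/
private noncomputable def twoLv {p q : ℕ} (T : Set (Fin p)) (a b : Fin q) : Fin p → Fin q :=
  fun l => if l ∈ T then b else a

private lemma twoLv_pos {p q : ℕ} {T : Set (Fin p)} {a b : Fin q} {l : Fin p} (h : l ∈ T) :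
    twoLv T a b l = b := by simp [twoLv, h]

private lemma twoLv_neg {p q : ℕ} {T : Set (Fin p)} {a b : Fin q} {l : Fin p} (h : l ∉ T) :
    twoLv T a b l = a := by simp [twoLv, h]

private lemma sm_ge {n : ℕ} {g : Fin (n + 1) → Fin (n + 1)} (hg : StrictMono g) :
    ∀ c, c ≤ g c := by
  intro c
  induction c using Fin.induction with
  | zero => exact Fin.zero_le _
  | succ i ih =>
    have h1 : g i.castSucc < g i.succ := hg Fin.castSucc_lt_succ
    simp only [Fin.le_def, Fin.lt_def, Fin.val_succ, Fin.coe_castSucc] at *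
    omega

/-- A monotone operation on `Fin (k+3)` preserving `≠` is a projection. -/
private lemma proj_of_pres {p : ℕ} (f : (Fin p → Fin (k + 3)) → Fin (k + 3))
    (hmono : ∀ w w' : Fin p → Fin (k + 3), (∀ l, w l ≤ w' l) → f w ≤ f w')
    (hne : ∀ w w' : Fin p → Fin (k + 3), (∀ l, w l ≠ w' l) → f w ≠ f w') :
    ∃ l0 : Fin p, ∀ w, f w = w l0 := by
  classical
  rcases Nat.eq_zero_or_pos p with hp | hp
  · subst hp
    exact ((hne (fun _ => 0) (fun _ => 0) (fun l => absurd l.isLt (by omega))) rfl).elim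
  -- f is the identity on constants
  have hid : ∀ c : Fin (k + 3), f (fun _ => c) = c := by
    have hsm : StrictMono (fun c : Fin (k + 3) => f (fun _ => c)) := by
      intro c c' hlt
      exact lt_of_le_of_ne (hmono _ _ fun l => le_of_lt hlt) (hne _ _ fun l => ne_of_lt hlt)
    have hsurj := Finite.injective_iff_surjective.mp hsm.injective
    set e := StrictMono.orderIsoOfSurjective _ hsm hsurj with he
    have hco : ∀ c, (e c : Fin (k + 3)) = f (fun _ => c) := fun c => rfl
    intro c
    have h1 : c ≤ f (fun _ => c) := sm_ge hsm c
    have h2 : (e c : Fin (k + 3)) ≤ e.symm (e c) := sm_ge e.symm.strictMono (e c)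
    rw [e.symm_apply_apply c, hco] at h2
    exact le_antisymm h2 h1
  -- conservativity
  have hcons : ∀ w, ∃ l, f w = w l := by
    intro w
    by_contra hcon
    push_neg at hcon
    exact (hne w (fun _ => f w) (fun l h => hcon l h.symm)) (by rw [hid])
  -- the two-level trace predicates
  set H : Fin (k + 3) → Fin (k + 3) → Set (Fin p) → Prop :=
    fun a b T => f (twoLv T a b) = b with hHdef
  have hmem : ∀ (a b : Fin (k + 3)) (T : Set (Fin p)),
      f (twoLv T a b) = a ∨ f (twoLv T a b) = b := by
    intro a b T
    obtain ⟨l, hl⟩ := hcons (twoLv T a b)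
    by_cases h : l ∈ T
    · right; rw [hl, twoLv_pos h]
    · left; rw [hl, twoLv_neg h]
  have hHmono : ∀ (a b : Fin (k + 3)) (T T' : Set (Fin p)), a < b → T ⊆ T' →
      H a b T → H a b T' := by
    intro a b T T' hab hTT' hT
    have h1 : f (twoLv T a b) ≤ f (twoLv T' a b) := by
      apply hmono
      intro l
      by_cases h : l ∈ T
      · rw [twoLv_pos h, twoLv_pos (hTT' h)]
      · rw [twoLv_neg h]
        by_cases h' : l ∈ T'
        · rw [twoLv_pos h']; exact le_of_lt hab
        · rw [twoLv_neg h']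
    rcases hmem a b T' with h2 | h2
    · rw [hT, h2] at h1
      exact absurd h1 (not_le_of_gt hab)
    · exact h2
  have hdual : ∀ (a b : Fin (k + 3)) (T : Set (Fin p)), a < b →
      (H a b T ↔ ¬ H a b Tᶜ) := by
    intro a b T hab
    have h1 : f (twoLv T a b) ≠ f (twoLv Tᶜ a b) := by
      apply hne
      intro l
      by_cases h : l ∈ T
      · rw [twoLv_pos h, twoLv_neg (by simp [h])]
        exact (ne_of_lt hab).symm
      · rw [twoLv_neg h, twoLv_pos (by simp [h])]
        exact ne_of_lt hab
    constructor
    · intro h2 h3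
      rw [h2, h3] at h1
      exact h1 rfl
    · intro h2
      rcases hmem a b T with h3 | h3
      · rcases hmem a b Tᶜ with h4 | h4
        · rw [h3, h4] at h1; exact absurd rfl h1
        · exact absurd h4 h2
      · exact h3
  -- the triple lemma
  have htriple : ∀ (a m b : Fin (k + 3)), a < m → m < b → ∀ T : Set (Fin p),
      (H a m T ↔ H a b T) ∧ (H m b T ↔ H a b T) := by
    intro a m b ham hmb T
    have hab : a < b := lt_trans ham hmb
    have step1 : ∀ T' : Set (Fin p), H a b T' → H m b T' := by
      intro T' h1
      have hd : f (twoLv T' a b) ≠ f (twoLv T'ᶜ m b) := by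
        apply hne
        intro l
        by_cases h : l ∈ T'
        · rw [twoLv_pos h, twoLv_neg (by simp [h])]
          exact (ne_of_lt hmb).symm
        · rw [twoLv_neg h, twoLv_pos (by simp [h])]
          exact ne_of_lt hab
      rw [h1] at hd
      have h2 : ¬ H m b T'ᶜ := fun h3 => hd h3.symm
      exact (hdual m b T' hmb).mpr h2
    have step2 : ∀ T' : Set (Fin p), H a m T' → H a b T' := by
      intro T' h1
      have hle : f (twoLv T' a m) ≤ f (twoLv T' a b) := by
        apply hmono
        intro l
        by_cases h : l ∈ T'
        · rw [twoLv_pos h, twoLv_pos h]; exact le_of_lt hmb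
        · rw [twoLv_neg h, twoLv_neg h]
      rw [h1] at hle
      rcases hmem a b T' with h2 | h2
      · rw [h2] at hle
        exact absurd hle (not_le_of_gt ham)
      · exact h2
    have revAM : H a b T → H a m T := by
      intro h1
      by_contra h2
      have h3 : H a m Tᶜ := (hdual a m Tᶜ ham).mpr (by rw [compl_compl]; exact h2)
      exact (hdual a b T hab).mp h1 (step2 Tᶜ h3)
    have revMB : H m b T → H a b T := by
      intro h1
      by_contra h2
      have h3 : H a b Tᶜ := (hdual a b Tᶜ hab).mpr (by rw [compl_compl]; exact h2)
      exact (hdual m b T hmb).mp h1 (step1 Tᶜ h3)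
    exact ⟨⟨step2 T, revAM⟩, ⟨revMB, step1 T⟩⟩
  -- all two-level traces agree
  set top : Fin (k + 3) := Fin.last (k + 2) with htop
  have hlttop : ∀ c : Fin (k + 3), c ≤ top := fun c => Fin.le_last c
  have h0top : (0 : Fin (k + 3)) < top := by
    rw [htop, Fin.lt_def]
    simp only [Fin.val_zero, Fin.val_last]
    omega
  have all_eq0 : ∀ b : Fin (k + 3), 0 < b → ∀ T, (H 0 b T ↔ H 0 top T) := by
    intro b hb T
    by_cases hbt : b = top
    · rw [hbt]
    · exact (htriple 0 b top hb (lt_of_le_of_ne (hlttop b) hbt) T).1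
  have all_eq : ∀ a b : Fin (k + 3), a < b → ∀ T, (H a b T ↔ H 0 top T) := by
    intro a b hab T
    by_cases ha : a = 0
    · subst ha
      exact all_eq0 b hab T
    · have h0a : (0 : Fin (k + 3)) < a := lt_of_le_of_ne (Fin.zero_le a) (Ne.symm ha)
      exact ((htriple 0 a b h0a hab T).2).trans (all_eq0 b (lt_trans h0a hab) T)
  set hh : Set (Fin p) → Prop := fun T => H 0 top T with hhdef
  have hhmono : ∀ T T', T ⊆ T' → hh T → hh T' := fun T T' hs => hHmono 0 top T T' h0top hs
  have hhdual : ∀ T, hh T ↔ ¬ hh Tᶜ := fun T => hdual 0 top T h0top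
  have hdual' : ∀ T, ¬ hh T → hh Tᶜ := by
    intro T h
    exact (hhdual Tᶜ).mpr (by rw [compl_compl]; exact h)
  have hhuniv : hh Set.univ := by
    show f (twoLv Set.univ (0 : Fin (k+3)) top) = top
    have h1 : twoLv (Set.univ : Set (Fin p)) (0 : Fin (k + 3)) top = fun _ => top := by
      funext l; exact twoLv_pos (Set.mem_univ l)
    rw [h1, hid]
  have hhempty : ¬ hh (∅ : Set (Fin p)) := by
    show ¬ f (twoLv ∅ (0 : Fin (k+3)) top) = top
    have h1 : twoLv (∅ : Set (Fin p)) (0 : Fin (k + 3)) top = fun _ => (0 : Fin (k + 3)) := by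
      funext l; exact twoLv_neg (Set.notMem_empty l)
    rw [h1, hid]
    exact (ne_of_lt h0top)
  have hpair : ∀ (a b : Fin (k + 3)) (T : Set (Fin p)), a < b →
      (f (twoLv T a b) = b ↔ hh T) := fun a b T hab => all_eq a b hab T
  -- three distinguished elements
  set e1 : Fin (k + 3) := ⟨1, by omega⟩ with he1
  set e2 : Fin (k + 3) := ⟨2, by omega⟩ with he2
  have h01 : (0 : Fin (k + 3)) < e1 := by
    rw [he1, Fin.lt_def]; simp only [Fin.val_zero]; omega
  have h12 : e1 < e2 := by
    rw [he1, he2]; exact Fin.mk_lt_mk.mpr (by omega)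
  have h02 : (0 : Fin (k + 3)) < e2 := lt_trans h01 h12
  -- intersection closure
  have hand : ∀ T1 T2, hh T1 → hh T2 → hh (T1 ∩ T2) := by
    intro T1 T2 hT1 hT2
    by_contra hP
    have hQ1 : ¬ hh (T1 \ T2) := by
      intro h
      exact (hhdual T2).mp hT2 (hhmono _ _ (fun l hl => hl.2) h)
    have hQ1c : hh ((T1 \ T2)ᶜ) := hdual' _ hQ1
    set x : Fin p → Fin (k + 3) :=
      fun l => if l ∈ T1 then (if l ∈ T2 then e1 else e2) else 0 with hx
    set z : Fin p → Fin (k + 3) :=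
      fun l => if l ∈ T1 then (if l ∈ T2 then e2 else 0) else e1 with hz
    have hx1 : ∀ l, l ∈ T1 → l ∈ T2 → x l = e1 := fun l h1 h2 => by simp [hx, h1, h2]
    have hx2 : ∀ l, l ∈ T1 → l ∉ T2 → x l = e2 := fun l h1 h2 => by simp [hx, h1, h2]
    have hx3 : ∀ l, l ∉ T1 → x l = 0 := fun l h1 => by simp [hx, h1]
    have hz1 : ∀ l, l ∈ T1 → l ∈ T2 → z l = e2 := fun l h1 h2 => by simp [hz, h1, h2]
    have hz2 : ∀ l, l ∈ T1 → l ∉ T2 → z l = 0 := fun l h1 h2 => by simp [hz, h1, h2]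
    have hz3 : ∀ l, l ∉ T1 → z l = e1 := fun l h1 => by simp [hz, h1]
    have fw : f (twoLv ((T1 \ T2)ᶜ) 0 e2) = e2 := (hpair 0 e2 _ h02).mpr hQ1c
    have fx_ge : e1 ≤ f x := by
      have h1 : ∀ l, twoLv T1 0 e1 l ≤ x l := by
        intro l
        by_cases hT : l ∈ T1
        · rw [twoLv_pos hT]
          by_cases hT2 : l ∈ T2
          · rw [hx1 l hT hT2]
          · rw [hx2 l hT hT2]; exact le_of_lt h12
        · rw [twoLv_neg hT, hx3 l hT]
      have h2 := hmono _ _ h1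
      rw [(hpair 0 e1 T1 h01).mpr hT1] at h2
      exact h2
    have fx_ne : f x ≠ e2 := by
      have h1 : f x ≠ f (twoLv ((T1 \ T2)ᶜ) 0 e2) := by
        apply hne
        intro l
        by_cases hT : l ∈ T1
        · by_cases hT2 : l ∈ T2
          · rw [hx1 l hT hT2, twoLv_pos (show l ∈ (T1 \ T2)ᶜ from fun hc => hc.2 hT2)]
            exact ne_of_lt h12
          · rw [hx2 l hT hT2, twoLv_neg (show l ∉ (T1 \ T2)ᶜ from fun hc => hc ⟨hT, hT2⟩)]
            exact (ne_of_lt h02).symm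
        · rw [hx3 l hT, twoLv_pos (show l ∈ (T1 \ T2)ᶜ from fun hc => hT hc.1)]
          exact ne_of_lt h02
      rw [fw] at h1; exact h1
    have fx : f x = e1 := by
      obtain ⟨l, hl⟩ := hcons x
      by_cases hT : l ∈ T1
      · by_cases hT2 : l ∈ T2
        · rw [hl, hx1 l hT hT2]
        · exact absurd (hl.trans (hx2 l hT hT2)) fx_ne
      · have h0 : f x = 0 := hl.trans (hx3 l hT)
        rw [h0] at fx_ge
        exact absurd fx_ge (not_le_of_gt h01)
    have fz_le : f z ≤ e1 := by
      have h1 : ∀ l, z l ≤ twoLv (T1 ∩ T2) e1 e2 l := by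
        intro l
        by_cases hT : l ∈ T1
        · by_cases hT2 : l ∈ T2
          · rw [hz1 l hT hT2, twoLv_pos (Set.mem_inter hT hT2)]
          · rw [hz2 l hT hT2]; exact Fin.zero_le _
        · rw [hz3 l hT, twoLv_neg (fun hc => hT hc.1)]
      have h2 := hmono _ _ h1
      have h3 : f (twoLv (T1 ∩ T2) e1 e2) = e1 := by
        rcases hmem e1 e2 (T1 ∩ T2) with h | h
        · exact h
        · exact absurd ((hpair e1 e2 _ h12).mp h) hP
      rw [h3] at h2; exact h2
    have fz_ge : e1 ≤ f z := by
      have h1 : ∀ l, twoLv ((T1 \ T2)ᶜ) 0 e1 l ≤ z l := by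
        intro l
        by_cases hT : l ∈ (T1 \ T2)ᶜ
        · rw [twoLv_pos hT]
          by_cases hT1 : l ∈ T1
          · have hT2 : l ∈ T2 := by
              by_contra hc; exact hT ⟨hT1, hc⟩
            rw [hz1 l hT1 hT2]; exact le_of_lt h12
          · rw [hz3 l hT1]
        · rw [twoLv_neg hT]; exact Fin.zero_le _
      have h2 := hmono _ _ h1
      rw [(hpair 0 e1 _ h01).mpr hQ1c] at h2
      exact h2
    have hxz : f x ≠ f z := by
      apply hne
      intro l
      by_cases hT : l ∈ T1
      · by_cases hT2 : l ∈ T2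
        · rw [hx1 l hT hT2, hz1 l hT hT2]; exact ne_of_lt h12
        · rw [hx2 l hT hT2, hz2 l hT hT2]; exact (ne_of_lt h02).symm
      · rw [hx3 l hT, hz3 l hT]; exact ne_of_lt h01
    exact hxz (fx.trans (le_antisymm fz_le fz_ge).symm)
  -- the filter is a principal ultrafilter
  set F : Set (Set (Fin p)) := { T | hh T } with hF
  set T0 : Set (Fin p) := ⋂₀ F with hT0def
  have hT0sub : ∀ U ∈ F, T0 ⊆ U := fun U hU => Set.sInter_subset_of_mem hU
  have hT0 : hh T0 := by
    have key : ∀ (G : Set (Set (Fin p))), G.Finite → G ⊆ F → hh (⋂₀ G) := by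
      intro G hfin
      refine Set.Finite.induction_on (motive := fun G' _ => G' ⊆ F → hh (⋂₀ G')) G hfin ?_ ?_
      · intro _
        rw [Set.sInter_empty]
        exact hhuniv
      · exact fun {a} {G'} ha hsf ih hsub => by
          rw [Set.sInter_insert]
          exact hand _ _ (hsub (Set.mem_insert _ _))
            (ih (fun g hg => hsub (Set.mem_insert_of_mem _ hg)))
    exact key F (Set.toFinite F) (fun g hg => hg)
  have hT0ne : T0.Nonempty := by
    rcases Set.eq_empty_or_nonempty T0 with h | h
    · rw [h] at hT0; exact absurd hT0 hhempty
    · exact h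
  obtain ⟨l0, hl0⟩ := hT0ne
  have hsingle : hh {l0} := by
    have h1 : ¬ hh (T0 \ {l0}) := by
      intro h
      exact (hT0sub _ h hl0).2 rfl
    have h3 : hh (T0 ∩ (T0 \ {l0})ᶜ) := hand _ _ hT0 (hdual' _ h1)
    have h4 : T0 ∩ (T0 \ {l0})ᶜ = {l0} := by
      ext l
      simp only [Set.mem_inter_iff, Set.mem_compl_iff, Set.mem_diff, Set.mem_singleton_iff]
      constructor
      · rintro ⟨h5, h6⟩
        by_contra h7
        exact h6 ⟨h5, h7⟩
      · rintro rfl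
        exact ⟨hl0, fun h5 => h5.2 rfl⟩
    rw [h4] at h3
    exact h3
  refine ⟨l0, fun w => ?_⟩
  set c : Fin (k + 3) := w l0 with hc
  have hge : c ≤ f w := by
    by_cases hc0 : c = 0
    · rw [hc0]; exact Fin.zero_le _
    · have hcpos : (0 : Fin (k + 3)) < c := lt_of_le_of_ne (Fin.zero_le c) (Ne.symm hc0)
      have hsub1 : ({l0} : Set (Fin p)) ⊆ { l | c ≤ w l } := by
        intro l hl
        rw [Set.mem_singleton_iff] at hl
        subst hl
        exact le_of_eq hc
      have hT : hh { l | c ≤ w l } := hhmono _ _ hsub1 hsingle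
      have h1 : ∀ l, twoLv { l | c ≤ w l } 0 c l ≤ w l := by
        intro l
        by_cases h : l ∈ { l | c ≤ w l }
        · rw [twoLv_pos h]; exact h
        · rw [twoLv_neg h]; exact Fin.zero_le _
      have h2 := hmono _ _ h1
      rw [(hpair 0 c _ hcpos).mpr hT] at h2
      exact h2
  have hle : f w ≤ c := by
    by_cases hct : c = top
    · rw [hct]; exact hlttop _
    · have hctop : c < top := lt_of_le_of_ne (hlttop c) hct
      have hT' : ¬ hh { l | c < w l } := by
        intro h
        have h2 := hT0sub _ h hl0
        rw [Set.mem_setOf_eq, ← hc] at h2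
        exact absurd h2 (lt_irrefl c)
      have h3 : f (twoLv { l | c < w l } c top) = c := by
        rcases hmem c top { l | c < w l } with h | h
        · exact h
        · exact absurd ((hpair c top _ hctop).mp h) hT'
      have h1 : ∀ l, w l ≤ twoLv { l | c < w l } c top l := by
        intro l
        by_cases h : l ∈ { l | c < w l }
        · rw [twoLv_pos h]; exact hlttop _
        · rw [twoLv_neg h]; exact le_of_not_gt h
      have h2 := hmono _ _ h1
      rw [h3] at h2
      exact h2
  exact le_antisymm hle hge

/-- Every constant `S`-relation belongs to `R` (main unsigned step). -/
private lemma const_mem (hR : IsSRelClone R)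
    (hle : (⟨1, fun _ => { a | a 0 ≤ a 1 }⟩ : SRel S AA) ∈ R)
    (hnegen : (⟨1, fun _ => { a | a 0 ≠ a 1 }⟩ : SRel S AA) ∈ R) :
    ∀ (m : ℕ) (σ : Set (Fin (m + 1) → AA)), (⟨m, fun _ => σ⟩ : SRel S AA) ∈ R := by
  intro m σ
  classical
  rcases Set.eq_empty_or_nonempty σ with hσ | hσ
  · subst hσ
    have h1 := hR.2.2.2.2.2.1 _ (full_mem hR hle m) _ (full_mem hR hle (m + 1))
    have he : interRel (⟨m, fun _ => (Set.univ : Set (Fin (m + 1) → AA))⟩ : SRel S AA)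
        (⟨m + 1, fun _ => (Set.univ : Set (Fin (m + 2) → AA))⟩ : SRel S AA)
        = ⟨m, fun _ => (∅ : Set (Fin (m + 1) → AA))⟩ := by
      unfold interRel
      rw [dif_neg (by omega : ¬ (m = m + 1))]
    rw [he] at h1
    exact h1
  · haveI : Fintype ↥σ := (Set.toFinite σ).fintype
    set p := Fintype.card ↥σ with hp
    set enum : ↥σ ≃ Fin p := Fintype.equivFin ↥σ with henum
    set M := (k + 3) ^ p - 1 with hM
    have hMpos : 0 < (k + 3) ^ p := pow_pos (by omega) p
    have hcard : Fintype.card (Fin p → AA) = M + 1 := by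
      rw [hM]
      simp only [Fintype.card_fun, Fintype.card_fin]
      omega
    set eF : (Fin p → AA) ≃ Fin (M + 1) := Fintype.equivFinOfCardEq hcard with heF
    set tbl : Fin p → (Fin (M + 1) → AA) := fun l => fun v => (eF.symm v) l with htbl
    set GG : Set (Set (Fin (M + 1) → AA)) :=
      { g | (⟨M, fun _ => g⟩ : SRel S AA) ∈ R ∧ ∀ l, tbl l ∈ g } with hGG
    set Γ : Set (Fin (M + 1) → AA) := ⋂₀ GG with hΓ
    have hΓmem : (⟨M, fun _ => Γ⟩ : SRel S AA) ∈ R :=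
      sInterConst_mem hR hle GG (fun g hg => hg.1)
    have htblΓ : ∀ l, tbl l ∈ Γ := fun l => Set.mem_sInter.mpr (fun g hg => hg.2 l)
    have hkey : ∀ a ∈ Γ, ∃ l0, a = tbl l0 := by
      intro a ha
      have hGGmem : ∀ (β : S → Set (Fin 2 → AA)),
          (⟨1, β⟩ : SRel S AA) ∈ R → ∀ w w' : Fin p → AA,
          (∀ l, (fun i : Fin 2 => (tbl l) ((![eF w, eF w'] : Fin 2 → Fin (M+1)) i)) ∈ β 1) →
          ({ c : Fin (M + 1) → AA |
            (fun i : Fin 2 => c ((![eF w, eF w'] : Fin 2 → Fin (M+1)) i)) ∈ β 1 } ∈ GG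
            ∨ True) := fun _ _ _ _ _ => Or.inr trivial
      -- monotone
      have hmono' : ∀ w w' : Fin p → AA, (∀ l, w l ≤ w' l) → a (eF w) ≤ a (eF w') := by
        intro w w' hww
        have hθ := pull_mem hR hle (![eF w, eF w'] : Fin 2 → Fin (M + 1)) hle
        have hθ' : (⟨M, fun _ => { c : Fin (M + 1) → AA | c (eF w) ≤ c (eF w') }⟩ : SRel S AA) ∈ R := by
          refine mem_congr_s16 (srel_eq fun s => ?_) hθ
          ext c
          simp only [Set.mem_setOf_eq, Matrix.cons_val_zero, Matrix.cons_val_one, Matrix.head_cons]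
        have hθGG : { c : Fin (M + 1) → AA | c (eF w) ≤ c (eF w') } ∈ GG := by
          refine ⟨hθ', fun l => ?_⟩
          show tbl l (eF w) ≤ tbl l (eF w')
          rw [htbl]
          simp only [Equiv.symm_apply_apply]
          exact hww l
        exact Set.mem_sInter.mp ha _ hθGG
      -- ≠-preserving
      have hne' : ∀ w w' : Fin p → AA, (∀ l, w l ≠ w' l) → a (eF w) ≠ a (eF w') := by
        intro w w' hww
        have hθ := pull_mem hR hle (![eF w, eF w'] : Fin 2 → Fin (M + 1)) hnegen
        have hθ' : (⟨M, fun _ => { c : Fin (M + 1) → AA | c (eF w) ≠ c (eF w') }⟩ : SRel S AA) ∈ R := by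
          refine mem_congr_s16 (srel_eq fun s => ?_) hθ
          ext c
          simp only [Set.mem_setOf_eq, Matrix.cons_val_zero, Matrix.cons_val_one, Matrix.head_cons]
        have hθGG : { c : Fin (M + 1) → AA | c (eF w) ≠ c (eF w') } ∈ GG := by
          refine ⟨hθ', fun l => ?_⟩
          show tbl l (eF w) ≠ tbl l (eF w')
          rw [htbl]
          simp only [Equiv.symm_apply_apply]
          exact hww l
        exact Set.mem_sInter.mp ha _ hθGG
      obtain ⟨l0, hl0⟩ := proj_of_pres (fun w => a (eF w)) hmono' hne'
      refine ⟨l0, ?_⟩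
      funext v
      have h1 := hl0 (eF.symm v)
      simp only [Equiv.apply_symm_apply] at h1
      rw [htbl]
      exact h1
    set g2 : Fin (m + 1) → Fin (M + 1) :=
      fun j => eF (fun l => ((enum.symm l : ↥σ) : Fin (m + 1) → AA) j) with hg2
    have hpush := push_mem hR hle g2 hΓmem
    refine mem_congr_s16 (srel_eq fun s => ?_) hpush
    ext b
    simp only [Set.mem_setOf_eq]
    constructor
    · rintro ⟨a, ha, rfl⟩
      obtain ⟨l0, rfl⟩ := hkey a ha
      have h1 : (fun j => tbl l0 (g2 j)) = ((enum.symm l0 : ↥σ) : Fin (m + 1) → AA) := by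
        funext j
        rw [htbl, hg2]
        simp only [Equiv.symm_apply_apply]
      rw [h1]
      exact (enum.symm l0).2
    · intro hb
      refine ⟨tbl (enum ⟨b, hb⟩), htblΓ _, ?_⟩
      funext j
      rw [htbl, hg2]
      simp only [Equiv.symm_apply_apply]

/-- Every `S`-relation belongs to `R`. -/
private lemma all_mem [Fintype S] (hR : IsSRelClone R)
    (heps : (⟨1, fun s => { a : Fin 2 → AA | s = 1 → a 0 = a 1 }⟩ : SRel S AA) ∈ R)
    (hle : (⟨1, fun _ => { a | a 0 ≤ a 1 }⟩ : SRel S AA) ∈ R)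
    (hnegen : (⟨1, fun _ => { a | a 0 ≠ a 1 }⟩ : SRel S AA) ∈ R) :
    ∀ ρ : SRel S AA, ρ ∈ R := by
  intro ρ
  obtain ⟨m, r⟩ := ρ
  classical
  have hpiece : ∀ v : S,
      (⟨m, fun s => { x : Fin (m + 1) → AA | s = v → x ∈ r v }⟩ : SRel S AA) ∈ R := by
    intro v
    have hχ := hR.2.2.2.2.2.2.2 v _ heps
    have hχ' : (⟨1, fun s => { a : Fin 2 → AA |
        ∀ s' : S, s' * v = s → (s' = 1 → a 0 = a 1) }⟩ : SRel S AA) ∈ R := hχ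
    have hC := const_mem hR hle hnegen (m + 2)
      { c : Fin (m + 3) → AA | c 0 = c 1 →
        (fun j : Fin (m + 1) => c ⟨2 + j.val, by have := j.isLt; omega⟩) ∈ r v }
    have hD := pull_mem hR hle
      ((![⟨0, by omega⟩, ⟨1, by omega⟩]) : Fin 2 → Fin (m + 2 + 1)) hχ'
    have hE := inter_mem hR hD hC
    have hF := dropFront hR 2 m _ hE
    refine mem_congr_s16 (srel_eq fun s => ?_) hF
    ext x
    simp only [Set.mem_setOf_eq, Set.mem_inter_iff, Matrix.cons_val_zero, Matrix.cons_val_one,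
      Matrix.head_cons]
    constructor
    · rintro ⟨a, ⟨hχa, hCa⟩, rfl⟩
      intro hsv
      have h01 : a ⟨0, by omega⟩ = a ⟨1, by omega⟩ := by
        have := hχa 1 (by rw [one_mul, hsv])
        exact this rfl
      have h2 := hCa h01
      exact h2
    · intro hx
      by_cases hsv : s = v
      · refine ⟨fun i => if h : i.val < 2 then 0 else x ⟨i.val - 2, by have := i.isLt; omega⟩,
          ⟨?_, ?_⟩, ?_⟩
        · intro s' _ _
          simp
        · intro _
          have h3 : (fun j : Fin (m + 1) =>
              (fun i : Fin (m + 3) => if h : i.val < 2 then (0 : AA)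
                else x ⟨i.val - 2, by have := i.isLt; omega⟩)
              ⟨2 + j.val, by have := j.isLt; omega⟩) = x := by
            funext j
            simp only []
            rw [dif_neg (by show ¬ (2 + j.val < 2); omega)]
            exact congrArg x (Fin.ext (by show 2 + (j : ℕ) - 2 = (j : ℕ); omega))
          rw [h3]
          exact hx hsv
        · funext j
          simp only []
          rw [dif_neg (by show ¬ (2 + j.val < 2); omega)]
          exact congrArg x (Fin.ext (by show (j : ℕ) = 2 + (j : ℕ) - 2; omega))
      · refine ⟨fun i => if h0 : i.val = 0 then 0 else if h1 : i.val = 1 then ⟨1, by omega⟩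
          else x ⟨i.val - 2, by have := i.isLt; omega⟩, ⟨?_, ?_⟩, ?_⟩
        · intro s' hs' h1'
          subst h1'
          rw [one_mul] at hs'
          exact absurd hs'.symm hsv
        · intro hcon
          simp only [] at hcon
          rw [dif_pos (by show (0 : ℕ) = 0; rfl)] at hcon
          rw [dif_neg (by show ¬ ((1 : ℕ) = 0); omega), dif_pos (by show (1 : ℕ) = 1; rfl)] at hcon
          have := congrArg Fin.val hcon
          simp at this
        · funext j
          simp only []
          rw [dif_neg (by show ¬ (2 + j.val = 0); omega),
            dif_neg (by show ¬ (2 + j.val = 1); omega)]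
          exact congrArg x (Fin.ext (by show (j : ℕ) = 2 + (j : ℕ) - 2; omega))
  have hfin := finInter_mem hR hle (Finset.univ : Finset S)
    (fun v => fun s => { x : Fin (m + 1) → AA | s = v → x ∈ r v }) (fun v _ => hpiece v)
  refine mem_congr_s16 (srel_eq fun s => ?_) hfin
  ext x
  simp only [Set.mem_iInter, Finset.mem_univ, true_implies, Set.mem_setOf_eq]
  constructor
  · intro h
    exact h s rfl
  · intro h v hsv
    rw [hsv] at h
    exact h

end Aux
/-- The full `S`-relational clone on `A = {0,…,k−1}` (`k ≥ 3`) is finitely generated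
by the three binary `S`-relations `(Δ_A, ∇_A, …, ∇_A)`, `(≤, ≤, …, ≤)` and
`(≠, ≠, …, ≠)` (first component for the signum `e`, the other components for all
`s ≠ e`). -/
theorem SRel_finitely_generated {S : Type*} [Monoid S] [Fintype S] (k : ℕ) :
    SRg ({ ⟨1, fun s => { a | s = 1 → a 0 = a 1 }⟩,
           ⟨1, fun _ => { a | a 0 ≤ a 1 }⟩,
           ⟨1, fun _ => { a | a 0 ≠ a 1 }⟩ } : Set (SRel S (Fin (k + 3)))) =
      (Set.univ : Set (SRel S (Fin (k + 3)))) := by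
  ext ρ
  simp only [Set.mem_univ, iff_true]
  intro Rc hRc
  obtain ⟨hclone, hsub⟩ := hRc
  exact all_mem hclone
    (hsub (Set.mem_insert _ _))
    (hsub (Set.mem_insert_of_mem _ (Set.mem_insert _ _)))
    (hsub (Set.mem_insert_of_mem _ (Set.mem_insert_of_mem _ rfl)))
    ρ

end SPreclone
end

section
/- Let S be a finite monoid and A a finite set with at least two elements. There are only finitely many maximal S-preclones on A (S-preclones maximal among those properly contained in SOp(A)) and only finitely many minimal S-preclones on A (S-preclones minimal among those properly containing SJ_A). -/
namespace SPreclone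

/-! ### Auxiliary development -/

section Aux
set_option linter.unusedSectionVars false

variable {S A : Type*} [Monoid S] {F : Set (SOp S A)}

lemma isSPreclone_univ : IsSPreclone (Set.univ : Set (SOp S A)) := by
  refine ⟨trivial, ?_, ?_, ?_, ?_, ?_⟩ <;> intros <;> trivial

/-- Apply a permutation of the variables (with the convention that the new
operation reads its `σ v`-th argument where the old one read its `v`-th). -/
def permApply (g : SOp S A) (σ : Equiv.Perm (Fin (g.n + 1))) : SOp S A :=
  ⟨g.n, fun x => g.fn (fun v => x (σ v)), fun j => g.sgn (σ.symm j)⟩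

@[simp] lemma permApply_n (g : SOp S A) (σ : Equiv.Perm (Fin (g.n + 1))) :
    (permApply g σ).n = g.n := rfl

lemma permApply_permApply (g : SOp S A) (τ σ : Equiv.Perm (Fin (g.n + 1))) :
    permApply (permApply g τ) σ = permApply g (τ.trans σ) := rfl

lemma permApply_refl (g : SOp S A) : permApply g (Equiv.refl _) = g := by
  cases g; rfl

lemma perm_mem_s18 (hF : IsSPreclone F) {g : SOp S A} (hg : g ∈ F)
    (σ : Equiv.Perm (Fin (g.n + 1))) : permApply g σ ∈ F := by
  obtain ⟨n, fn, sg⟩ := g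
  rcases n with _ | k
  · have hsub : Subsingleton (Equiv.Perm (Fin ((SOp.mk 0 fn sg : SOp S A).n + 1))) := by
      refine ⟨fun a b => Equiv.ext fun x => ?_⟩
      exact Subsingleton.elim (α := Fin 1) _ _
    have : σ = Equiv.refl _ := @Subsingleton.elim _ hsub _ _
    rw [this, permApply_refl]; exact hg
  · have hP : ∀ (π : Equiv.Perm (Fin (k + 2))),
        π ∈ Subgroup.closure {finRotate (k+2), Equiv.swap 0 ((finRotate (k+2)) 0)} →
        ∀ (fnh : (Fin (k+2) → A) → A) (sgh : Fin (k+2) → S),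
          (⟨k+1, fnh, sgh⟩ : SOp S A) ∈ F →
          permApply (⟨k+1, fnh, sgh⟩ : SOp S A) π ∈ F := by
      intro π hπ
      induction hπ using Subgroup.closure_induction with
      | mem x hx =>
        have h1 : (finRotate (k+2)) (0 : Fin (k+2)) = 1 := by
          rw [finRotate_succ_apply]; simp
        rcases hx with hx | hx
        · -- cyclic rotation
          subst hx
          intro fnh sgh hh
          have hsymm : ∀ j : Fin (k + 2), (finRotate (k+2)).symm j = j - 1 := by
            intro j
            apply (Equiv.symm_apply_eq _).mpr
            rw [finRotate_succ_apply, sub_add_cancel]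
          have heq : permApply (⟨k+1, fnh, sgh⟩ : SOp S A) (finRotate (k+2))
              = cycOp ⟨k+1, fnh, sgh⟩ := by
            show (⟨k+1, _, _⟩ : SOp S A) = ⟨k+1, _, _⟩
            congr 1
            · funext x
              exact congrArg fnh (funext fun v => congrArg x (finRotate_succ_apply v))
            · funext j
              exact congrArg sgh (hsymm j)
          rw [heq]; exact hF.2.1 _ hh
        · -- adjacent swap
          rw [Set.mem_singleton_iff] at hx
          subst hx
          intro fnh sgh hh
          rw [h1]
          have heq : permApply (⟨k+1, fnh, sgh⟩ : SOp S A) (Equiv.swap 0 1)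
              = swapOp ⟨k+1, fnh, sgh⟩ := by
            show (⟨k+1, _, _⟩ : SOp S A) = ⟨k+1, _, _⟩
            congr 1
          rw [heq]; exact hF.2.2.1 _ hh
      | one =>
        intro fnh sgh hh
        have : (1 : Equiv.Perm (Fin (k+2))) = Equiv.refl _ := rfl
        rw [this, permApply_refl]; exact hh
      | mul x y hx hy Px Py =>
        intro fnh sgh hh
        have hstep : permApply (⟨k+1, fnh, sgh⟩ : SOp S A) (x * y)
            = permApply (permApply (⟨k+1, fnh, sgh⟩ : SOp S A) y) x := rfl
        rw [hstep]
        exact Px _ _ (Py _ _ hh)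
      | inv x hx Px =>
        have hpos : 0 < orderOf x := orderOf_pos x
        have hinv : x⁻¹ = x ^ (orderOf x - 1) := by
          have h2 : x ^ (orderOf x - 1) * x = 1 := by
            rw [← pow_succ,
              show orderOf x - 1 + 1 = orderOf x from Nat.succ_pred_eq_of_pos hpos]
            exact pow_orderOf_eq_one x
          exact (eq_inv_of_mul_eq_one_left h2).symm
        have hpow : ∀ (j : ℕ) (fnh : (Fin (k+2) → A) → A) (sgh : Fin (k+2) → S),
            (⟨k+1, fnh, sgh⟩ : SOp S A) ∈ F →
            permApply (⟨k+1, fnh, sgh⟩ : SOp S A) (x ^ j) ∈ F := by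
          intro j
          induction j with
          | zero =>
            intro fnh sgh hh
            have : (x ^ 0 : Equiv.Perm (Fin (k+2))) = Equiv.refl _ := by
              rw [pow_zero]; rfl
            rw [this, permApply_refl]; exact hh
          | succ j ih =>
            intro fnh sgh hh
            have hstep : permApply (⟨k+1, fnh, sgh⟩ : SOp S A) (x ^ (j + 1))
                = permApply (permApply (⟨k+1, fnh, sgh⟩ : SOp S A) (x ^ j)) x := by
              rw [pow_succ']
              rfl
            rw [hstep]
            exact Px _ _ (ih _ _ hh)
        rw [hinv]
        exact hpow _
    have htop : σ ∈ Subgroup.closure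
        {finRotate (k+2), Equiv.swap 0 ((finRotate (k+2)) 0)} := by
      rw [Equiv.Perm.closure_cycle_adjacent_swap isCycle_finRotate (by
        rw [support_finRotate]) 0]
      trivial
    exact hP σ htop fn sg hg


open Classical in
lemma deltaOp_succ {m : ℕ} (fn : (Fin (m + 1 + 1) → A) → A) (sg : Fin (m + 1 + 1) → S) :
    deltaOp (⟨m + 1, fn, sg⟩ : SOp S A) =
      if sg 0 = sg 1 then
        ⟨m, fun x => fn fun j => x ⟨j.val - 1, by have := j.isLt; omega⟩,
          fun i => sg i.succ⟩
      else ⟨m + 1, fn, sg⟩ := rfl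

/-- Merging two arguments with equal signa. -/
lemma merge_spec (hF : IsSPreclone F) {f : SOp S A} (hf : f ∈ F) {i i' : Fin (f.n + 1)}
    (hne : i ≠ i') (hsg : f.sgn i = f.sgn i') :
    ∃ g ∈ F, ∃ (_ : g.n + 1 = f.n) (ψ : Fin (g.n + 1) → Fin (f.n + 1)),
      (∀ x : Fin (f.n + 1) → A, x i = x i' → f.fn x = g.fn (fun w => x (ψ w))) ∧
      (∀ w, g.sgn w = f.sgn (ψ w)) := by
  obtain ⟨n, fn, sg⟩ := f
  rcases n with _ | k
  · exact absurd (Subsingleton.elim (α := Fin 1) i i') hne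
  · have h01 : (0 : Fin (k + 2)) ≠ 1 := by simp [Fin.ext_iff]
    set t1 : Equiv.Perm (Fin (k + 2)) := Equiv.swap 0 i with ht1
    set v'' : Fin (k + 2) := t1.symm i' with hv''
    have hv0 : v'' ≠ 0 := by
      intro h
      apply hne
      have h2 : i' = t1 0 := by
        rw [← h, hv'', Equiv.apply_symm_apply]
      rw [ht1, Equiv.swap_apply_left] at h2
      exact h2.symm
    set t2 : Equiv.Perm (Fin (k + 2)) := Equiv.swap 1 v'' with ht2
    set π : Equiv.Perm (Fin (k + 2)) := t2.trans t1 with hπdef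
    have hπ0 : π 0 = i := by
      have h2 : t2 0 = 0 := Equiv.swap_apply_of_ne_of_ne h01 (Ne.symm hv0)
      rw [hπdef, Equiv.trans_apply, h2, ht1, Equiv.swap_apply_left]
    have hπ1 : π 1 = i' := by
      rw [hπdef, Equiv.trans_apply, ht2, Equiv.swap_apply_left, hv'',
        Equiv.apply_symm_apply]
    set σ : Equiv.Perm (Fin (k + 2)) := π.symm with hσdef
    have hσi : σ i = 0 := by rw [← hπ0, hσdef]; exact π.symm_apply_apply 0
    have hσi' : σ i' = 1 := by rw [← hπ1, hσdef]; exact π.symm_apply_apply 1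
    set P : SOp S A := permApply (⟨k + 1, fn, sg⟩ : SOp S A) σ with hPdef
    have hP : P ∈ F := perm_mem_s18 hF hf σ
    have e0 : σ.symm 0 = i := by rw [← hσi, Equiv.symm_apply_apply]
    have e1 : σ.symm 1 = i' := by rw [← hσi', Equiv.symm_apply_apply]
    have hsgn01 : P.sgn 0 = P.sgn 1 := by
      show sg (σ.symm 0) = sg (σ.symm 1)
      rw [e0, e1]; exact hsg
    have hdelta := hF.2.2.2.2.1 P hP
    have hdeq : deltaOp P =
        (⟨k, fun x => P.fn fun j => x ⟨j.val - 1, by have : (j : ℕ) < k + 1 + 1 := j.isLt; omega⟩,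
          fun w => P.sgn w.succ⟩ : SOp S A) := by
      show deltaOp (⟨k + 1, P.fn, P.sgn⟩ : SOp S A) = _
      rw [deltaOp_succ (m := k) (fn := P.fn) (sg := P.sgn)]
      exact if_pos hsgn01

    rw [hdeq] at hdelta
    refine ⟨_, hdelta, rfl, fun w => π w.succ, ?_, ?_⟩
    · intro x hx
      have claim : ∀ u : Fin (k + 2),
          x (π (Fin.succ (⟨(σ u).val - 1, by have := (σ u).isLt; omega⟩ : Fin (k + 1))))
            = x u := by
        intro u
        rcases eq_or_ne (σ u) 0 with h0 | h0
        · have hu : u = i := σ.injective (h0.trans hσi.symm)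
          have hs1 : Fin.succ (⟨(σ u).val - 1, by have := (σ u).isLt; omega⟩ : Fin (k + 1))
              = 1 := by
            apply Fin.ext
            simp [h0]
          rw [hs1, hπ1, hu]
          exact hx.symm
        · have hval : 1 ≤ (σ u).val := by
            rcases Nat.eq_zero_or_pos (σ u).val with hz | hp
            · exact absurd (Fin.ext hz) h0
            · omega
          have hs1 : Fin.succ (⟨(σ u).val - 1, by have := (σ u).isLt; omega⟩ : Fin (k + 1))
              = σ u := by
            apply Fin.ext
            simp
            omega
          rw [hs1, hσdef, Equiv.apply_symm_apply]
      exact (congrArg fn (funext fun u => claim u)).symm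
    · intro w
      show P.sgn w.succ = sg (σ.symm w.succ)
      rfl

lemma minor_aux (hF : IsSPreclone F) :
    ∀ (k m : ℕ) (T : SOp S A), T ∈ F → m = T.n + k →
    ∀ (φ : Fin (T.n + 1) → Fin (m + 1)) (μ : Fin (m + 1) → S),
      Function.Injective φ → (∀ v, T.sgn v = μ (φ v)) →
      (⟨m, fun z => T.fn (fun v => z (φ v)), μ⟩ : SOp S A) ∈ F := by
  intro k
  induction k with
  | zero =>
    intro m T hT hm φ μ hinj hμ
    obtain rfl : m = T.n := by omega
    have hbij : Function.Bijective φ := Finite.injective_iff_bijective.mp hinj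
    set σ : Equiv.Perm (Fin (T.n + 1)) := Equiv.ofBijective φ hbij with hσ
    have heq : (⟨T.n, fun z => T.fn (fun v => z (φ v)), μ⟩ : SOp S A) = permApply T σ := by
      show _ = (⟨T.n, fun x => T.fn (fun v => x (σ v)), fun j => T.sgn (σ.symm j)⟩ : SOp S A)
      congr 1
      funext j
      have h2 : T.sgn (σ.symm j) = μ j := by
        rw [hμ (σ.symm j)]
        exact congrArg μ (σ.apply_symm_apply j)
      exact h2.symm
    rw [heq]; exact perm_mem_s18 hF hT σ
  | succ k ih =>
    intro m T hT hm φ μ hinj hμ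
    obtain ⟨p₀, hp₀⟩ : ∃ p₀, ∀ v, φ v ≠ p₀ := by
      by_contra hcon
      push_neg at hcon
      have hs : Function.Surjective φ := fun p => hcon p
      have := Fintype.card_le_of_surjective φ hs
      simp only [Fintype.card_fin] at this
      omega
    set T' := nablaOp (μ p₀) T with hT'def
    have hT'F : T' ∈ F := hF.2.2.2.1 _ _ hT
    set φ' : Fin (T.n + 1 + 1) → Fin (m + 1) := Fin.cases p₀ (fun v => φ v) with hφ'
    have hinj' : Function.Injective φ' := by
      intro a b hab
      rcases Fin.eq_zero_or_eq_succ a with rfl | ⟨a', rfl⟩ <;>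
        rcases Fin.eq_zero_or_eq_succ b with rfl | ⟨b', rfl⟩
      · rfl
      · simp only [hφ', Fin.cases_zero, Fin.cases_succ] at hab
        exact absurd hab.symm (hp₀ b')
      · simp only [hφ', Fin.cases_zero, Fin.cases_succ] at hab
        exact absurd hab (hp₀ a')
      · simp only [hφ', Fin.cases_succ] at hab
        rw [hinj hab]
    have hcond' : ∀ v, T'.sgn v = μ (φ' v) := by
      intro v
      rcases Fin.eq_zero_or_eq_succ v with rfl | ⟨v', rfl⟩
      · show Fin.cases (motive := fun _ => S) (μ p₀) T.sgn 0 = μ (φ' 0)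
        simp only [hφ', Fin.cases_zero]
      · show Fin.cases (motive := fun _ => S) (μ p₀) T.sgn v'.succ = μ (φ' v'.succ)
        simp only [hφ', Fin.cases_succ]
        exact hμ v'
    have hres := ih m T' hT'F (by show m = T.n + 1 + k; omega) φ' μ hinj' hcond'
    have heq : (⟨m, fun z => T.fn (fun v => z (φ v)), μ⟩ : SOp S A)
        = ⟨m, fun z => T'.fn (fun v => z (φ' v)), μ⟩ := by
      congr 1
    rw [heq]; exact hres

/-- The fundamental "minor" lemma: an `S`-preclone is closed under arbitrary
variable substitutions that are compatible with the signa. -/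
lemma minor_mem (hF : IsSPreclone F) {T : SOp S A} (hT : T ∈ F) {m : ℕ}
    (φ : Fin (T.n + 1) → Fin (m + 1)) (μ : Fin (m + 1) → S)
    (hμ : ∀ v, T.sgn v = μ (φ v)) :
    (⟨m, fun z => T.fn (fun v => z (φ v)), μ⟩ : SOp S A) ∈ F := by
  suffices h : ∀ (N : ℕ) (T : SOp S A), T.n = N → T ∈ F → ∀ (m : ℕ)
      (φ : Fin (T.n + 1) → Fin (m + 1)) (μ : Fin (m + 1) → S),
      (∀ v, T.sgn v = μ (φ v)) →
      (⟨m, fun z => T.fn (fun v => z (φ v)), μ⟩ : SOp S A) ∈ F by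
    exact h T.n T rfl hT m φ μ hμ
  intro N
  induction N using Nat.strong_induction_on with
  | _ N IH =>
    intro T hTn hT m φ μ hμ
    by_cases hinj : Function.Injective φ
    · have hm : m = T.n + (m - T.n) := by
        have := Fintype.card_le_of_injective φ hinj
        simp only [Fintype.card_fin] at this
        omega
      exact minor_aux hF (m - T.n) m T hT hm φ μ hinj hμ
    · rw [Function.not_injective_iff] at hinj
      obtain ⟨a, b, hab, hne⟩ := hinj
      have hsg : T.sgn a = T.sgn b := by rw [hμ a, hμ b, hab]
      obtain ⟨g, hgF, hgn, ψ, hfn, hsgn⟩ := merge_spec hF hT hne hsg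
      have hres := IH g.n (by omega) g rfl hgF m (fun w => φ (ψ w)) μ
        (fun w => by rw [hsgn w]; exact hμ (ψ w))
      have heq : (⟨m, fun z => T.fn (fun v => z (φ v)), μ⟩ : SOp S A)
          = ⟨m, fun z => g.fn (fun w => z (φ (ψ w))), μ⟩ := by
        congr 1
        funext z
        exact hfn (fun v => z (φ v)) (congrArg z hab)
      rw [heq]; exact hres

lemma triv_mem (hF : IsSPreclone F) {n : ℕ} (i : Fin (n + 1)) (lam : Fin (n + 1) → S)
    (hlam : lam i = 1) : (⟨n, fun x => x i, lam⟩ : SOp S A) ∈ F := by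
  have := minor_mem hF (T := idOp S A) hF.1 (fun _ => i) lam (fun v => by
    show (1 : S) = lam i
    rw [hlam])
  exact this

lemma SJ_subset (hF : IsSPreclone F) : SJ S A ⊆ F := by
  intro f hf
  obtain ⟨i, h1, h2⟩ := hf
  have heq : f = ⟨f.n, fun x => x i, f.sgn⟩ := by
    obtain ⟨n, fn, sg⟩ := f
    congr 1
    funext x
    exact h2 x
  rw [heq]
  exact triv_mem hF i f.sgn h1


/-- Closure of an `S`-preclone under general superposition
`f(g₀(z ∘ vars₀), …, g_n(z ∘ vars_n))` with arbitrary variable identifications. -/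
lemma superpose [Nonempty A] (hF : IsSPreclone F) {f : SOp S A} (hf : f ∈ F)
    (g : Fin (f.n + 1) → SOp S A) (hg : ∀ i, g i ∈ F) {m : ℕ}
    (vars : ∀ i, Fin ((g i).n + 1) → Fin (m + 1)) (μ : Fin (m + 1) → S)
    (hμ : ∀ i j, (g i).sgn j * f.sgn i = μ (vars i j)) :
    (⟨m, fun z => f.fn (fun i => (g i).fn (fun j => z (vars i j))), μ⟩ : SOp S A) ∈ F := by
  have key : ∀ t : ℕ, t ≤ f.n + 1 → ∃ U : SOp S A, U ∈ F ∧
      ∃ w : Fin (U.n + 1) → (Fin (m + 1) ⊕ Fin (f.n + 1)),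
      (∀ (z : Fin (m + 1) → A) (y : Fin (f.n + 1) → A),
        U.fn (fun v => Sum.elim z y (w v)) =
          f.fn (fun i => if i.val < t then (g i).fn (fun j => z (vars i j)) else y i)) ∧
      (∀ v, (∀ p, w v = Sum.inl p → U.sgn v = μ p) ∧
            (∀ i, w v = Sum.inr i → t ≤ i.val ∧ U.sgn v = f.sgn i)) ∧
      (∀ i : Fin (f.n + 1), t ≤ i.val → ∃! v, w v = Sum.inr i) := by
    intro t
    induction t with
    | zero =>
      intro _
      refine ⟨f, hf, Sum.inr, ?_, ?_, ?_⟩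
      · intro z y
        have h2 : (fun i : Fin (f.n + 1) =>
            if i.val < 0 then (g i).fn (fun j => z (vars i j)) else y i) = y := by
          funext i; simp
        rw [h2]
        rfl
      · intro v
        refine ⟨fun p hp => by simp at hp, fun i hi => ⟨Nat.zero_le _, ?_⟩⟩
        rw [show v = i from Sum.inr_injective hi]
      · intro i _
        exact ⟨i, rfl, fun v hv => Sum.inr_injective hv⟩
    | succ t IH =>
      intro ht
      obtain ⟨U, hU, w, qa, qb, qc⟩ := IH (by omega)
      set i_t : Fin (f.n + 1) := ⟨t, by omega⟩ with hit
      have hitval : i_t.val = t := rfl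
      obtain ⟨v₀, hv₀, hv₀uniq⟩ := qc i_t (le_refl t)
      set σ : Equiv.Perm (Fin (U.n + 1)) := Equiv.swap 0 v₀ with hσ
      set U' := permApply U σ with hU'def
      have hU' : U' ∈ F := perm_mem_s18 hF hU σ
      set w' : Fin (U.n + 1) → (Fin (m + 1) ⊕ Fin (f.n + 1)) := fun v => w (σ v) with hw'
      have hσσ : ∀ v, σ (σ v) = v := fun v => Equiv.swap_apply_self _ _ _
      have hw'0 : w' 0 = Sum.inr i_t := by
        show w (σ 0) = Sum.inr i_t
        rw [hσ, Equiv.swap_apply_left]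
        exact hv₀
      have qa' : ∀ z y, U'.fn (fun v => Sum.elim z y (w' v)) =
          f.fn (fun i => if i.val < t then (g i).fn (fun j => z (vars i j)) else y i) := by
        intro z y
        have h2 : U'.fn (fun v => Sum.elim z y (w' v)) = U.fn (fun v => Sum.elim z y (w v)) := by
          show U.fn (fun u => Sum.elim z y (w' (σ u))) = _
          exact congrArg U.fn (funext fun u => by
            show Sum.elim z y (w (σ (σ u))) = _
            rw [hσσ u])
        rw [h2]; exact qa z y
      have qb' : ∀ v, (∀ p, w' v = Sum.inl p → U'.sgn v = μ p) ∧
            (∀ i, w' v = Sum.inr i → t ≤ i.val ∧ U'.sgn v = f.sgn i) := by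
        intro v
        have hsgn : U'.sgn v = U.sgn (σ v) := by
          show U.sgn (σ.symm v) = _
          rw [hσ, Equiv.symm_swap]
        refine ⟨fun p hp => ?_, fun i hi => ?_⟩
        · rw [hsgn]; exact (qb (σ v)).1 p hp
        · rw [hsgn]; exact (qb (σ v)).2 i hi
      have qc' : ∀ i : Fin (f.n + 1), t ≤ i.val → ∃! v, w' v = Sum.inr i := by
        intro i hi
        obtain ⟨v₁, hv₁, hv₁u⟩ := qc i hi
        refine ⟨σ v₁, ?_, ?_⟩
        · show w (σ (σ v₁)) = Sum.inr i
          rw [hσσ]; exact hv₁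
        · intro v hv
          have h2 : σ v = v₁ := hv₁u (σ v) hv
          rw [← h2, hσσ]
      set gt := g i_t with hgt
      set V := compOp U' gt with hVdef
      have hV : V ∈ F := hF.2.2.2.2.2 U' hU' gt (hg i_t)
      have hVn : V.n = gt.n + U.n := rfl
      set w'' : Fin (V.n + 1) → (Fin (m + 1) ⊕ Fin (f.n + 1)) := fun p =>
        if h : p.val < gt.n + 1 then Sum.inl (vars i_t ⟨p.val, h⟩)
        else w' ⟨p.val - gt.n, by
          have := p.isLt
          have hVn : V.n = gt.n + U.n := rfl
          omega⟩ with hw''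
      have hww : ∀ (p : Fin (V.n + 1)) (h : p.val < gt.n + 1),
          w'' p = Sum.inl (vars i_t ⟨p.val, h⟩) := fun p h => dif_pos h
      have hww2 : ∀ (p : Fin (V.n + 1)) (h : ¬ p.val < gt.n + 1),
          w'' p = w' ⟨p.val - gt.n, by
            have := p.isLt
            have hVn : V.n = gt.n + U.n := rfl
            omega⟩ := fun p h => dif_neg h
      have hVsgn_lo : ∀ (v : Fin (V.n + 1)) (h : v.val < gt.n + 1),
          V.sgn v = gt.sgn ⟨v.val, h⟩ * U'.sgn 0 := fun v h => dif_pos h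
      have hVsgn_hi : ∀ (v : Fin (V.n + 1)) (h : ¬ v.val < gt.n + 1),
          V.sgn v = U'.sgn ⟨v.val - gt.n, by
            have := v.isLt
            have hVn : V.n = gt.n + U.n := rfl
            have hUU : U'.n = U.n := rfl
            omega⟩ := fun v h => dif_neg h
      have hU'0 : U'.sgn 0 = f.sgn i_t := ((qb' 0).2 i_t hw'0).2
      refine ⟨V, hV, w'', ?_, ?_, ?_⟩
      · -- composition formula
        intro z y
        set y' : Fin (f.n + 1) → A :=
          Function.update y i_t (gt.fn (fun q => z (vars i_t q))) with hy'
        have hVq : ∀ q : Fin (gt.n + 1), q.val < V.n + 1 := by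
          intro q; have := q.isLt; omega
        have hblock : ∀ q : Fin (gt.n + 1),
            Sum.elim z y (w'' ⟨q.val, hVq q⟩) = z (vars i_t q) := by
          intro q
          rw [hww ⟨q.val, hVq q⟩ q.isLt]
          have h3 : (⟨(⟨q.val, hVq q⟩ : Fin (V.n + 1)).val,
              q.isLt⟩ : Fin (gt.n + 1)) = q := Fin.ext rfl
          rw [h3, Sum.elim_inl]
        have hVj : ∀ j : Fin U.n, gt.n + 1 + j.val < V.n + 1 := by
          intro j; have := j.isLt; omega
        have htail : ∀ j : Fin U.n,
            w'' ⟨gt.n + 1 + j.val, hVj j⟩ = w' j.succ := by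
          intro j
          rw [hww2 ⟨gt.n + 1 + j.val, by have := j.isLt; omega⟩
            (by show ¬ gt.n + 1 + j.val < gt.n + 1; omega)]
          exact congrArg w' (Fin.ext (show gt.n + 1 + j.val - gt.n = j.val + 1 by omega))
        have hmain : ∀ k : Fin (U.n + 1),
            (Fin.cases (motive := fun _ => A)
              (gt.fn (fun q => Sum.elim z y (w'' ⟨q.val, hVq q⟩)))
              (fun j => Sum.elim z y (w'' ⟨gt.n + 1 + j.val, hVj j⟩)) k)
            = Sum.elim z y' (w' k) := by
          intro k
          induction k using Fin.cases with
          | zero =>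
            rw [Fin.cases_zero, hw'0, Sum.elim_inr, hy', Function.update_self]
            exact congrArg gt.fn (funext fun q => hblock q)
          | succ j =>
            rw [Fin.cases_succ, htail j]
            cases hwj : w' j.succ with
            | inl p => rfl
            | inr i =>
              show y i = y' i
              have hne : i ≠ i_t := by
                intro h
                subst h
                obtain ⟨vu, hvu, huniq⟩ := qc' i_t (le_refl t)
                have e1 : (0 : Fin (U.n + 1)) = vu := huniq 0 hw'0
                have e2 : j.succ = vu := huniq j.succ hwj
                rw [← e1] at e2
                exact Fin.succ_ne_zero j e2
              rw [hy', Function.update_of_ne hne]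
        have hstep : V.fn (fun v => Sum.elim z y (w'' v)) =
            U'.fn (fun k => Sum.elim z y' (w' k)) :=
          congrArg U'.fn (funext hmain)
        rw [hstep, qa' z y']
        refine congrArg f.fn (funext fun i => ?_)
        rcases lt_trichotomy i.val t with hlt | heq2 | hgt2
        · rw [if_pos hlt, if_pos (by omega)]
        · have hii : i = i_t := Fin.ext heq2
          rw [if_neg (by omega), if_pos (by omega), hii, hy', Function.update_self]
        · rw [if_neg (by omega), if_neg (by omega), hy',
            Function.update_of_ne (fun h => by rw [h, hitval] at hgt2; omega)]
      · -- signa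
        intro v
        constructor
        · intro p hp
          by_cases hv : v.val < gt.n + 1
          · have hpv : Sum.inl (α := Fin (m+1)) (β := Fin (f.n+1)) p
                = Sum.inl (vars i_t ⟨v.val, hv⟩) := by rw [← hp, hww v hv]
            rw [hVsgn_lo v hv, hU'0, Sum.inl_injective hpv]
            exact hμ i_t ⟨v.val, hv⟩
          · rw [hww2 v hv] at hp
            rw [hVsgn_hi v hv]
            exact (qb' _).1 p hp
        · intro i hi
          by_cases hv : v.val < gt.n + 1
          · rw [hww v hv] at hi; simp at hi
          · rw [hww2 v hv] at hi
            have h2 := (qb' _).2 i hi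
            have hne_it : i ≠ i_t := by
              intro h
              subst h
              obtain ⟨vu, hvu, huniq⟩ := qc' i_t (le_refl t)
              have e1 : (0 : Fin (U.n + 1)) = vu := huniq 0 hw'0
              have e2 := huniq _ hi
              rw [← e1] at e2
              have hval := congrArg Fin.val e2
              simp at hval
              omega
            refine ⟨?_, by rw [hVsgn_hi v hv]; exact h2.2⟩
            have h3 : i.val ≠ t := fun h => hne_it (Fin.ext h)
            have := h2.1
            omega
      · -- unique existence
        intro i hi
        have hne_it : i ≠ i_t := fun h => by
          have : i.val = t := by rw [h, hitval]
          omega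
        obtain ⟨v₁, hv₁, hv₁u⟩ := qc' i (by omega)
        have hv₁0 : v₁ ≠ 0 := by
          intro h
          rw [h, hw'0] at hv₁
          exact hne_it (Sum.inr_injective hv₁).symm
        have hv₁pos : 1 ≤ v₁.val := by
          rcases Nat.eq_zero_or_pos v₁.val with h0 | h1
          · exact absurd (Fin.ext h0) hv₁0
          · omega
        refine ⟨⟨gt.n + v₁.val, by
          have := v₁.isLt
          have hVn : V.n = gt.n + U.n := rfl
          omega⟩, ?_, ?_⟩

        · exact (hww2 _ (show ¬ gt.n + v₁.val < gt.n + 1 by omega)).trans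
            ((congrArg w' (Fin.ext
              (show gt.n + v₁.val - gt.n = v₁.val by omega))).trans hv₁)
        · intro p hp
          by_cases hv : p.val < gt.n + 1
          · rw [hww p hv] at hp; simp at hp
          · rw [hww2 p hv] at hp
            have h5 := hv₁u _ hp
            have hval := congrArg Fin.val h5
            simp at hval
            apply Fin.ext
            simp
            omega
  obtain ⟨U, hU, w, qa, qb, qc⟩ := key (f.n + 1) (le_refl _)
  have hall : ∀ v, ∃ p, w v = Sum.inl p := by
    intro v
    cases hwv : w v with
    | inl p => exact ⟨p, rfl⟩
    | inr i =>
      have h2 := ((qb v).2 i hwv).1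
      have := i.isLt
      omega
  choose φ hφ using hall
  have hμ' : ∀ v, U.sgn v = μ (φ v) := fun v => (qb v).1 (φ v) (hφ v)
  have hmm := minor_mem hF hU φ μ hμ'
  obtain ⟨a0⟩ := (inferInstance : Nonempty A)
  have heq : (⟨m, fun z => f.fn (fun i => (g i).fn (fun j => z (vars i j))), μ⟩ : SOp S A)
      = ⟨m, fun z => U.fn (fun v => z (φ v)), μ⟩ := by
    congr 1
    funext z
    rw [show (fun v => z (φ v)) = (fun v => Sum.elim z (fun _ => a0) (w v)) from
      funext fun v => by rw [hφ v]; rfl]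
    rw [qa z (fun _ => a0)]
    exact congrArg f.fn (funext fun i => (if_pos i.isLt).symm)
  rw [heq]; exact hmm


/-- Sierpiński-type generation: operations of arity at most `|A|` generate everything. -/
lemma gen_bounded [Fintype A] [Nonempty A] (hF : IsSPreclone F)
    (hall : ∀ g : SOp S A, g.n ≤ Fintype.card A → g ∈ F) (f₀ : SOp S A) : f₀ ∈ F := by
  suffices h : ∀ (N : ℕ) (f : SOp S A), f.n = N → f ∈ F from h f₀.n f₀ rfl
  intro N
  induction N using Nat.strong_induction_on with
  | _ N IH =>
    intro f hfn
    by_cases hle : f.n ≤ Fintype.card A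
    · exact hall f hle
    · push_neg at hle
      obtain ⟨n, fn, sg⟩ := f
      have hle' : Fintype.card A < n := hle
      have hfn' : n = N := hfn
      have hn1 : 1 ≤ n := by have := Fintype.card_pos (α := A); omega
      set c := Fintype.card A with hc
      set eA := Fintype.equivFin A with heA
      set wOp : SOp S A := ⟨c, fun u => u (Fin.succ (eA (u 0))),
        fun p => if p = 0 then sg 0 else 1⟩ with hw
      have hwF : wOp ∈ F := hall wOp (le_refl c)
      have h2 : n = (n - 1) + 1 := by omega
      set fA : A → SOp S A := fun a =>
        ⟨n - 1, fun y => fn (Fin.cases a (fun v => y (Fin.cast h2 v))),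
          fun q => sg (Fin.succ (Fin.cast h2.symm q))⟩ with hfA
      have hfAF : ∀ a, fA a ∈ F := fun a => IH (n - 1) (by omega) (fA a) rfl
      set gblocks : Fin (c + 1) → SOp S A :=
        Fin.cases (⟨n - 1, fun y => y 0, fun _ => 1⟩ : SOp S A)
          (fun i => fA (eA.symm i)) with hgb
      have hgbF : ∀ i, gblocks i ∈ F := by
        intro i
        rcases Fin.eq_zero_or_eq_succ i with rfl | ⟨i', rfl⟩
        · simp only [hgb, Fin.cases_zero]
          exact triv_mem hF 0 _ rfl
        · simp only [hgb, Fin.cases_succ]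
          exact hfAF _
      set varsb : ∀ i : Fin (c + 1), Fin ((gblocks i).n + 1) → Fin (n + 1) :=
        Fin.cases (motive := fun i => Fin ((gblocks i).n + 1) → Fin (n + 1))
          (fun _ => 0) (fun i' q => Fin.succ (Fin.cast h2.symm q)) with hvb
      have hcond : ∀ i j, (gblocks i).sgn j * wOp.sgn i = sg (varsb i j) := by
        intro i j
        rcases Fin.eq_zero_or_eq_succ i with rfl | ⟨i', rfl⟩
        · show (1 : S) * (if (0 : Fin (c + 1)) = 0 then sg 0 else 1) = sg 0
          rw [if_pos rfl, one_mul]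
        · show (fA (eA.symm i')).sgn j * (if i'.succ = (0 : Fin (c + 1)) then sg 0 else 1)
            = sg (Fin.succ (Fin.cast h2.symm j))
          rw [if_neg (Fin.succ_ne_zero i'), mul_one]
      have hres := superpose hF hwF gblocks hgbF varsb sg hcond
      have heq : (⟨n, fun z => wOp.fn (fun i => (gblocks i).fn (fun j => z (varsb i j))),
          sg⟩ : SOp S A) = ⟨n, fn, sg⟩ := by
        congr 1
        funext z
        set u : Fin (c + 1) → A := fun i => (gblocks i).fn (fun j => z (varsb i j)) with hu
        have hu0 : u 0 = z 0 := rfl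
        have hus : ∀ i' : Fin c, u i'.succ
            = fn (Fin.cases (eA.symm i') (fun v => z (Fin.succ v))) := by
          intro i'
          simp only [hu, hgb, hvb, Fin.cases_succ, hfA]
          refine congrArg fn (funext fun x => ?_)
          induction x using Fin.cases with
          | zero => rw [Fin.cases_zero, Fin.cases_zero]
          | succ v =>
            rw [Fin.cases_succ, Fin.cases_succ]
            exact congrArg z (congrArg Fin.succ (Fin.ext rfl))
        show u (Fin.succ (eA (u 0))) = fn z
        rw [hu0, hus (eA (z 0)), Equiv.symm_apply_apply]
        refine congrArg fn (funext fun x => ?_)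
        induction x using Fin.cases with
        | zero => rw [Fin.cases_zero]
        | succ v => rw [Fin.cases_succ]
      rw [← heq]
      exact hres

lemma isSPreclone_SSg (G : Set (SOp S A)) : IsSPreclone (SSg G) := by
  refine ⟨?_, ?_, ?_, ?_, ?_, ?_⟩
  · exact fun H hH => hH.1.1
  · exact fun f hf H hH => hH.1.2.1 f (hf H hH)
  · exact fun f hf H hH => hH.1.2.2.1 f (hf H hH)
  · exact fun s f hf H hH => hH.1.2.2.2.1 s f (hf H hH)
  · exact fun f hf H hH => hH.1.2.2.2.2.1 f (hf H hH)
  · exact fun f hf g hg H hH => hH.1.2.2.2.2.2 f (hf H hH) g (hg H hH)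

lemma subset_SSg (G : Set (SOp S A)) : G ⊆ SSg G := fun _ hf _ hH => hH.2 hf

lemma SSg_subset {G H : Set (SOp S A)} (hH : IsSPreclone H) (hsub : G ⊆ H) :
    SSg G ⊆ H := fun f hf => hf H ⟨hH, hsub⟩

/-- `SPol Q` is always an `S`-preclone. -/
lemma isSPreclone_SPol (Q : Set (SRel S A)) : IsSPreclone (SPol Q) := by
  refine ⟨?_, ?_, ?_, ?_, ?_, ?_⟩
  · intro ρ hρ s r hr
    have h2 : r 0 ∈ ρ.rel s := by
      have h3 := hr 0
      rwa [show (idOp S A).sgn 0 * s = s from one_mul s] at h3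
    exact h2
  · intro f hf ρ hρ s r hr
    have h2 := hf ρ hρ s (fun v => r ((v + 1 : Fin (f.n + 1)))) (fun v => by
      have h4 : r ((v + 1 : Fin (f.n + 1))) ∈ ρ.rel (f.sgn (v + 1 - 1) * s) :=
        hr ((v + 1 : Fin (f.n + 1)))
      rwa [add_sub_cancel_right] at h4)
    exact h2
  · intro f hf ρ hρ s r hr
    have h2 := hf ρ hρ s (fun v => r (Equiv.swap 0 1 v)) (fun v => by
      have h4 : r (Equiv.swap 0 1 v) ∈
          ρ.rel (f.sgn (Equiv.swap 0 1 (Equiv.swap 0 1 v)) * s) :=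
        hr (Equiv.swap 0 1 v)
      rwa [Equiv.swap_apply_self] at h4)
    exact h2
  · intro s' f hf ρ hρ s r hr
    have h2 := hf ρ hρ s (fun v => r v.succ) (fun v => by
      have h4 : r v.succ ∈
          ρ.rel (Fin.cases (motive := fun _ => S) s' f.sgn v.succ * s) := hr v.succ
      rwa [Fin.cases_succ] at h4)
    exact h2
  · intro f hf ρ hρ
    obtain ⟨n, fn, sg⟩ := f
    rcases n with _ | k
    · exact hf ρ hρ
    · by_cases hsg : sg 0 = sg 1
      · rw [show deltaOp (⟨k + 1, fn, sg⟩ : SOp S A) =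
            ⟨k, fun x => fn fun j => x ⟨j.val - 1, by have := j.isLt; omega⟩,
              fun i => sg i.succ⟩ from by rw [deltaOp_succ, if_pos hsg]]
        intro s r hr
        have hrn : ∀ j : Fin (k + 1 + 1), j.val - 1 < k + 1 := fun j => by
          have := j.isLt; omega
        have hcond : ∀ j : Fin (k + 1 + 1),
            r ⟨j.val - 1, hrn j⟩ ∈ ρ.rel (sg j * s) := by
          intro j
          rcases Fin.eq_zero_or_eq_succ j with rfl | ⟨j', rfl⟩
          · have h01 : Fin.succ (0 : Fin (k + 1)) = (1 : Fin (k + 2)) := by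
              apply Fin.ext; simp
            have h4 : r (0 : Fin (k + 1)) ∈
                ρ.rel (sg (Fin.succ (0 : Fin (k + 1))) * s) := hr 0
            rw [h01] at h4
            rw [hsg]
            exact h4
          · exact hr j'
        have h2 := hf ρ hρ s (fun j => r ⟨j.val - 1, hrn j⟩) hcond
        exact h2
      · rw [show deltaOp (⟨k + 1, fn, sg⟩ : SOp S A) = ⟨k + 1, fn, sg⟩ from by
          rw [deltaOp_succ, if_neg hsg]]
        exact hf ρ hρ
  · intro f hf g hg ρ hρ s r hr
    set castL : Fin (g.n + 1) → Fin (g.n + f.n + 1) :=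
      fun i => ⟨i.val, by have := i.isLt; omega⟩ with hcastL
    set castH : Fin f.n → Fin (g.n + f.n + 1) :=
      fun v => ⟨g.n + 1 + v.val, by have := v.isLt; omega⟩ with hcastH
    have hsgn_lo : ∀ i : Fin (g.n + 1),
        (compOp f g).sgn (castL i) = g.sgn i * f.sgn 0 :=
      fun i => (dif_pos i.isLt).trans
        (congrArg (· * f.sgn 0) (congrArg g.sgn (Fin.ext rfl)))
    have hsgn_hi : ∀ v : Fin f.n,
        (compOp f g).sgn (castH v) = f.sgn v.succ :=
      fun v => (dif_neg (show ¬ (g.n + 1 + v.val < g.n + 1) by omega)).trans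
        (congrArg f.sgn (Fin.ext (show g.n + 1 + v.val - g.n = v.val + 1 by omega)))
    have hfirst : ∀ i : Fin (g.n + 1),
        r (castL i) ∈ ρ.rel (g.sgn i * (f.sgn 0 * s)) := by
      intro i
      have h3 := hr (castL i)
      rw [hsgn_lo i, mul_assoc] at h3
      exact h3
    have hcol := hg ρ hρ (f.sgn 0 * s) (fun i => r (castL i)) hfirst
    have htail : ∀ v : Fin f.n, r (castH v) ∈ ρ.rel (f.sgn v.succ * s) := by
      intro v
      have h3 := hr (castH v)
      rw [hsgn_hi v] at h3
      exact h3
    set r'' : Fin (f.n + 1) → (Fin (ρ.m + 1) → A) :=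
      Fin.cases (fun j => g.fn fun i => r (castL i) j) (fun v => r (castH v)) with hr''
    have hcond'' : ∀ k, r'' k ∈ ρ.rel (f.sgn k * s) := by
      intro k
      induction k using Fin.cases with
      | zero =>
        have : r'' 0 = fun j => g.fn fun i => r (castL i) j := by
          simp only [hr'', Fin.cases_zero]
        rw [this]
        exact hcol
      | succ v =>
        have : r'' v.succ = r (castH v) := by
          simp only [hr'', Fin.cases_succ]
        rw [this]
        exact htail v
    have hres := hf ρ hρ s r'' hcond''
    have heq : (fun j => (compOp f g).fn fun i => r i j)
        = (fun j => f.fn fun k => r'' k j) := by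
      funext j
      refine congrArg f.fn (funext fun k => ?_)
      induction k using Fin.cases with
      | zero =>
        show (g.fn fun i => r _ j) = r'' 0 j
        have : r'' 0 = fun j => g.fn fun i => r (castL i) j := by
          simp only [hr'', Fin.cases_zero]
        rw [this]
      | succ v =>
        show r _ j = r'' v.succ j
        have : r'' v.succ = r (castH v) := by
          simp only [hr'', Fin.cases_succ]
        rw [this]
    rw [heq]
    exact hres


/-- Derivable columns: the inductive construction of the least invariant
`S`-relation containing `χ^λ`. -/
inductive Der (F : Set (SOp S A)) {n₀ : ℕ} (lam : Fin (n₀ + 1) → S) :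
    S → ((Fin (n₀ + 1) → A) → A) → Prop
  | proj (j : Fin (n₀ + 1)) : Der F lam (lam j) (fun z => z j)
  | comp (f : SOp S A) (hf : f ∈ F) (s : S)
      (r : Fin (f.n + 1) → ((Fin (n₀ + 1) → A) → A))
      (h : ∀ i, Der F lam (f.sgn i * s) (r i)) :
      Der F lam s (fun z => f.fn (fun i => r i z))

lemma der_realize [Nonempty A] (hF : IsSPreclone F) {n₀ : ℕ} {lam : Fin (n₀ + 1) → S}
    {s : S} {b : (Fin (n₀ + 1) → A) → A} (h : Der F lam s b) :
    ∃ T ∈ F, ∃ varsT : Fin (T.n + 1) → Fin (n₀ + 1),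
      (∀ z, T.fn (fun v => z (varsT v)) = b z) ∧ (∀ v, T.sgn v * s = lam (varsT v)) := by
  induction h with
  | proj j =>
    exact ⟨idOp S A, hF.1, fun _ => j, fun z => rfl, fun v => one_mul _⟩
  | comp f hf s r hder IH =>
    choose T hT varsT hreal hsgn using IH
    have hpos : 0 < Fintype.card (Σ i : Fin (f.n + 1), Fin ((T i).n + 1)) := by
      rw [Fintype.card_pos_iff]
      exact ⟨⟨0, 0⟩⟩
    set M := Fintype.card (Σ i : Fin (f.n + 1), Fin ((T i).n + 1)) - 1 with hM
    have hM1 : Fintype.card (Σ i : Fin (f.n + 1), Fin ((T i).n + 1)) = M + 1 := by omega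
    set E : (Σ i : Fin (f.n + 1), Fin ((T i).n + 1)) ≃ Fin (M + 1) :=
      (Fintype.equivFin _).trans (finCongr hM1) with hE
    set varsS : ∀ i : Fin (f.n + 1), Fin ((T i).n + 1) → Fin (M + 1) :=
      fun i j => E ⟨i, j⟩ with hvarsS
    set μ : Fin (M + 1) → S :=
      fun q => (T (E.symm q).1).sgn (E.symm q).2 * f.sgn (E.symm q).1 with hμdef
    have hcond : ∀ i j, (T i).sgn j * f.sgn i = μ (varsS i j) := by
      intro i j
      have h2 : E.symm (E ⟨i, j⟩) = ⟨i, j⟩ := E.symm_apply_apply _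
      simp only [hμdef, hvarsS]
      rw [h2]
    have hsup := superpose hF hf T (fun i => hT i) varsS μ hcond
    refine ⟨_, hsup, fun q => varsT (E.symm q).1 (E.symm q).2, ?_, ?_⟩
    · intro z
      show f.fn (fun i => (T i).fn (fun j =>
        z (varsT (E.symm (varsS i j)).1 (E.symm (varsS i j)).2))) = f.fn (fun i => r i z)
      refine congrArg f.fn (funext fun i => ?_)
      have h3 : ∀ j, z (varsT (E.symm (varsS i j)).1 (E.symm (varsS i j)).2)
          = z (varsT i j) := by
        intro j
        have h2 : E.symm (varsS i j) = ⟨i, j⟩ := E.symm_apply_apply _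
        exact congrArg z (congrArg
          (fun x : (Σ i : Fin (f.n + 1), Fin ((T i).n + 1)) => varsT x.1 x.2) h2)
      calc (T i).fn (fun j => z (varsT (E.symm (varsS i j)).1 (E.symm (varsS i j)).2))
          = (T i).fn (fun j => z (varsT i j)) := congrArg _ (funext h3)
        _ = r i z := hreal i z
    · intro v
      show μ v * s = lam (varsT (E.symm v).1 (E.symm v).2)
      simp only [hμdef]
      rw [mul_assoc]
      exact hsgn (E.symm v).1 (E.symm v).2

lemma der_mem [Nonempty A] (hF : IsSPreclone F) {n₀ : ℕ} {lam : Fin (n₀ + 1) → S}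
    {b : (Fin (n₀ + 1) → A) → A} (h : Der F lam 1 b) :
    (⟨n₀, b, lam⟩ : SOp S A) ∈ F := by
  obtain ⟨T, hT, varsT, hreal, hsgn⟩ := der_realize hF h
  have hμ : ∀ v, T.sgn v = lam (varsT v) := fun v => by
    have h2 := hsgn v
    rwa [mul_one] at h2
  have h3 := minor_mem hF hT varsT lam hμ
  have heq : (⟨n₀, fun z => T.fn (fun v => z (varsT v)), lam⟩ : SOp S A)
      = ⟨n₀, b, lam⟩ := by
    congr 1
    funext z
    exact hreal z
  rwa [heq] at h3

/-- A relation of bounded arity preserved by all small members of a preclone is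
preserved by all members. -/
lemma loc_preserves [Fintype S] [Fintype A] (hF : IsSPreclone F) (ρ : SRel S A)
    (B : ℕ) (hB : Fintype.card S * Fintype.card A ^ (ρ.m + 1) < B)
    (hsmall : ∀ f ∈ F, f.n + 1 ≤ B → SPreserves f ρ) :
    ∀ f ∈ F, SPreserves f ρ := by
  suffices h : ∀ (N : ℕ) (f : SOp S A), f.n = N → f ∈ F → SPreserves f ρ from
    fun f hf => h f.n f rfl hf
  intro N
  induction N using Nat.strong_induction_on with
  | _ N IH =>
    intro f hfn hf
    by_cases hle : f.n + 1 ≤ B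
    · exact hsmall f hf hle
    · push_neg at hle
      intro s r hr
      have hcard : Fintype.card (S × (Fin (ρ.m + 1) → A))
          < Fintype.card (Fin (f.n + 1)) := by
        rw [Fintype.card_prod, Fintype.card_fun, Fintype.card_fin, Fintype.card_fin]
        omega
      obtain ⟨a, b, hab, heq2⟩ := Fintype.exists_ne_map_eq_of_card_lt
        (fun v : Fin (f.n + 1) => (f.sgn v, r v)) hcard
      have hsg : f.sgn a = f.sgn b := congrArg Prod.fst heq2
      have hcol : r a = r b := congrArg Prod.snd heq2
      obtain ⟨g, hgF, hgn, ψ, hfn2, hsgn2⟩ := merge_spec hF hf hab hsg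
      have hpres := IH g.n (by omega) g rfl hgF
      have h2 := hpres s (fun w => r (ψ w)) (fun w => by
        rw [hsgn2 w]; exact hr (ψ w))
      have heq3 : (fun j => f.fn fun v => r v j) = (fun j => g.fn fun w => r (ψ w) j) := by
        funext j
        exact hfn2 (fun v => r v j) (congrArg (fun col => col j) hcol)
      rw [heq3]
      exact h2


/-- Separation: if `x_a = x_b` on the subspace defined by two disjoint identified
pairs, then `a = b` or both lie in one of the pairs. -/
lemma sep_pair [Nontrivial A] {n : ℕ} {i i' u u' a b : Fin (n + 1)}
    (hii : i ≠ i') (huu : u ≠ u') (h1 : i ≠ u) (h2 : i ≠ u') (h3 : i' ≠ u) (h4 : i' ≠ u')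
    (h : ∀ x : Fin (n + 1) → A, x i = x i' → x u = x u' → x a = x b) :
    a = b ∨ ((a = i ∨ a = i') ∧ (b = i ∨ b = i')) ∨
      ((a = u ∨ a = u') ∧ (b = u ∨ b = u')) := by
  by_contra hcon
  have hab : ¬ a = b := fun h' => hcon (Or.inl h')
  have hP : ¬ ((a = i ∨ a = i') ∧ (b = i ∨ b = i')) := fun h' => hcon (Or.inr (Or.inl h'))
  have hQ : ¬ ((a = u ∨ a = u') ∧ (b = u ∨ b = u')) := fun h' => hcon (Or.inr (Or.inr h'))
  obtain ⟨a0, a1, ha01⟩ := exists_pair_ne A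
  classical
  set cls : Fin (n + 1) → Prop := fun v =>
    v = a ∨ ((v = i ∨ v = i') ∧ (a = i ∨ a = i')) ∨
      ((v = u ∨ v = u') ∧ (a = u ∨ a = u')) with hcls
  set x : Fin (n + 1) → A := fun v => if cls v then a0 else a1 with hx
  have e1 : ∀ v, (v = i ∨ v = i') → (cls v ↔ (a = i ∨ a = i')) := by
    intro v hv
    simp only [hcls]
    constructor
    · rintro (rfl | ⟨hv2, ha2⟩ | ⟨hv2, ha2⟩)
      · exact hv
      · exact ha2
      · exfalso
        rcases hv with rfl | rfl <;> rcases hv2 with h5 | h5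
        · exact h1 h5
        · exact h2 h5
        · exact h3 h5
        · exact h4 h5
    · intro ha2
      exact Or.inr (Or.inl ⟨hv, ha2⟩)
  have e2 : ∀ v, (v = u ∨ v = u') → (cls v ↔ (a = u ∨ a = u')) := by
    intro v hv
    simp only [hcls]
    constructor
    · rintro (rfl | ⟨hv2, ha2⟩ | ⟨hv2, ha2⟩)
      · exact hv
      · exfalso
        rcases hv2 with h5 | h5 <;> rcases hv with h6 | h6
        · exact h1 (h5.symm.trans h6)
        · exact h2 (h5.symm.trans h6)
        · exact h3 (h5.symm.trans h6)
        · exact h4 (h5.symm.trans h6)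
      · exact ha2
    · intro ha2
      exact Or.inr (Or.inr ⟨hv, ha2⟩)
  have hxii : x i = x i' := by
    simp only [hx]
    rw [if_congr ((e1 i (Or.inl rfl)).trans ((e1 i' (Or.inr rfl)).symm)) rfl rfl]
  have hxuu : x u = x u' := by
    simp only [hx]
    rw [if_congr ((e2 u (Or.inl rfl)).trans ((e2 u' (Or.inr rfl)).symm)) rfl rfl]
  have hxa : x a = a0 := by
    simp only [hx]
    rw [if_pos (Or.inl rfl)]
  have hxb : x b = a1 := by
    simp only [hx]
    rw [if_neg ?_]
    rintro (hba | ⟨hb2, ha2⟩ | ⟨hb2, ha2⟩)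
    · exact hab hba.symm
    · exact hP ⟨ha2, hb2⟩
    · exact hQ ⟨ha2, hb2⟩
  have hfin := h x hxii hxuu
  rw [hxa, hxb] at hfin
  exact ha01 hfin

/-- Świerczkowski-type lemma: if all identification minors within a large
class are (signed-trivial) projections, then the operation is itself a trivial
projection. -/
lemma sw_proj [Nontrivial A] [Fintype A] {n : ℕ} (f : (Fin (n + 1) → A) → A)
    (sg : Fin (n + 1) → S) (C : Finset (Fin (n + 1)))
    (hcard : max (Fintype.card A + 1) 8 ≤ C.card)
    (hp : ∀ i ∈ C, ∀ i' ∈ C, i ≠ i' → ∃ p, sg p = 1 ∧ ∀ x, x i = x i' → f x = x p) :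
    ∃ k, sg k = 1 ∧ ∀ x, f x = x k := by
  classical
  obtain ⟨D, hDC, hD8⟩ := Finset.exists_subset_card_eq (show 8 ≤ C.card by omega)
  set η : Fin 8 → Fin (n + 1) := fun t => ((Finset.equivFinOfCardEq hD8).symm t).val with hη
  have hηC : ∀ t, η t ∈ C := fun t => hDC ((Finset.equivFinOfCardEq hD8).symm t).2
  have hηinj : Function.Injective η := fun t t' h =>
    (Equiv.injective _) (Subtype.coe_injective h)
  set e1 : Fin 4 → Fin (n + 1) := fun t => η ⟨2 * t.val, by omega⟩ with he1
  set e2 : Fin 4 → Fin (n + 1) := fun t => η ⟨2 * t.val + 1, by omega⟩ with he2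
  have hne12 : ∀ t, e1 t ≠ e2 t := by
    intro t h
    have h2 := hηinj h
    rw [Fin.ext_iff] at h2
    simp at h2
  have hdisj : ∀ t t', t ≠ t' →
      e1 t ≠ e1 t' ∧ e1 t ≠ e2 t' ∧ e2 t ≠ e1 t' ∧ e2 t ≠ e2 t' := by
    intro t t' htt
    have hv : t.val ≠ t'.val := fun h => htt (Fin.ext h)
    refine ⟨?_, ?_, ?_, ?_⟩ <;>
      (intro h; have h2 := hηinj h; rw [Fin.ext_iff] at h2; simp at h2; omega)
  have hpc : ∀ t : Fin 4, ∃ p, sg p = 1 ∧ ∀ x, x (e1 t) = x (e2 t) → f x = x p :=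
    fun t => hp (e1 t) (hηC _) (e2 t) (hηC _) (hne12 t)
  choose pp hpp1 hpp2 using hpc
  have hrel : ∀ t t', t ≠ t' →
      pp t = pp t' ∨ ((pp t = e1 t ∨ pp t = e2 t) ∧ (pp t' = e1 t ∨ pp t' = e2 t)) ∨
        ((pp t = e1 t' ∨ pp t = e2 t') ∧ (pp t' = e1 t' ∨ pp t' = e2 t')) := by
    intro t t' htt
    obtain ⟨d1, d2, d3, d4⟩ := hdisj t t' htt
    exact sep_pair (hne12 t) (hne12 t') d1 d2 d3 d4
      (fun x hP hQ => (hpp2 t x hP).symm.trans (hpp2 t' x hQ))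
  set selfish : Fin 4 → Prop := fun t => pp t = e1 t ∨ pp t = e2 t with hselfdef
  have hself_point : ∀ t t', t ≠ t' → selfish t → (pp t' = e1 t ∨ pp t' = e2 t) := by
    intro t t' htt hs
    rcases hrel t t' htt with h | h | h
    · exact h ▸ hs
    · exact h.2
    · exfalso
      obtain ⟨d1, d2, d3, d4⟩ := hdisj t t' htt
      rcases hs with h2 | h2 <;> rcases h.1 with h3 | h3
      · exact d1 (h2.symm.trans h3)
      · exact d2 (h2.symm.trans h3)
      · exact d3 (h2.symm.trans h3)
      · exact d4 (h2.symm.trans h3)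
  have hself_unique : ∀ t t', selfish t → selfish t' → t = t' := by
    intro t t' hst hst'
    by_contra htt
    have hex : ∃ t'' : Fin 4, t'' ≠ t ∧ t'' ≠ t' := by
      by_contra hno
      push_neg at hno
      have hsub : (Finset.univ : Finset (Fin 4)) ⊆ {t, t'} := by
        intro y _
        rcases eq_or_ne y t with rfl | hy
        · exact Finset.mem_insert_self _ _
        · rw [hno y hy]
          exact Finset.mem_insert.mpr (Or.inr (Finset.mem_singleton_self _))
      have hcc := Finset.card_le_card hsub
      have h2 : ({t, t'} : Finset (Fin 4)).card ≤ 2 :=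
        (Finset.card_insert_le _ _).trans (by simp)
      rw [Finset.card_univ, Fintype.card_fin] at hcc
      omega
    obtain ⟨t'', hne1, hne2⟩ := hex
    have p1 := hself_point t t'' (Ne.symm hne1) hst
    have p2 := hself_point t' t'' (Ne.symm hne2) hst'
    obtain ⟨d1, d2, d3, d4⟩ := hdisj t t' htt
    rcases p1 with h3 | h3 <;> rcases p2 with h4 | h4
    · exact d1 (h3.symm.trans h4)
    · exact d2 (h3.symm.trans h4)
    · exact d3 (h3.symm.trans h4)
    · exact d4 (h3.symm.trans h4)
  have hnself_eq : ∀ t t', t ≠ t' → ¬ selfish t → ¬ selfish t' → pp t = pp t' := by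
    intro t t' htt hns hns'
    rcases hrel t t' htt with h | h | h
    · exact h
    · exact absurd h.1 hns
    · exact absurd h.2 hns'
  have hex2 : ∃ t : Fin 4, ¬ selfish t := by
    by_cases h0 : selfish 0
    · exact ⟨1, fun h => absurd (hself_unique _ _ h h0) (by decide)⟩
    · exact ⟨0, h0⟩
  obtain ⟨t₀, hns₀⟩ := hex2
  set k := pp t₀ with hk
  have hk1 : sg k = 1 := hpp1 t₀
  have hnsk : ∀ t, ¬ selfish t → pp t = k := by
    intro t hns
    rcases eq_or_ne t t₀ with rfl | htne
    · rfl
    · exact hnself_eq t t₀ htne hns hns₀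
  have hstar : ∀ u ∈ C, ∀ u' ∈ C, u ≠ u' → ∀ q,
      (∀ x, x u = x u' → f x = x q) →
      q = k ∨ ((k = u ∨ k = u') ∧ (q = u ∨ q = u')) := by
    intro u hu u' hu' huu q hqx
    have hT1 : ∀ t t', (e1 t = u ∨ e2 t = u) → (e1 t' = u ∨ e2 t' = u) → t = t' := by
      intro t t' h h'
      by_contra htt
      obtain ⟨d1, d2, d3, d4⟩ := hdisj t t' htt
      rcases h with h | h <;> rcases h' with h' | h'
      · exact d1 (h.trans h'.symm)
      · exact d2 (h.trans h'.symm)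
      · exact d3 (h.trans h'.symm)
      · exact d4 (h.trans h'.symm)
    have hT2 : ∀ t t', (e1 t = u' ∨ e2 t = u') → (e1 t' = u' ∨ e2 t' = u') → t = t' := by
      intro t t' h h'
      by_contra htt
      obtain ⟨d1, d2, d3, d4⟩ := hdisj t t' htt
      rcases h with h | h <;> rcases h' with h' | h'
      · exact d1 (h.trans h'.symm)
      · exact d2 (h.trans h'.symm)
      · exact d3 (h.trans h'.symm)
      · exact d4 (h.trans h'.symm)
    have hexd : ∃ t : Fin 4, ¬ selfish t ∧ e1 t ≠ u ∧ e1 t ≠ u' ∧ e2 t ≠ u ∧ e2 t ≠ u' := by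
      by_contra hno
      push_neg at hno
      have hall : ∀ t : Fin 4, selfish t ∨ (e1 t = u ∨ e2 t = u) ∨
          (e1 t = u' ∨ e2 t = u') := by
        intro t
        by_cases hst : selfish t
        · exact Or.inl hst
        · rcases eq_or_ne (e1 t) u with h | hA
          · exact Or.inr (Or.inl (Or.inl h))
          · rcases eq_or_ne (e2 t) u with h | hB
            · exact Or.inr (Or.inl (Or.inr h))
            · rcases eq_or_ne (e1 t) u' with h | hC
              · exact Or.inr (Or.inr (Or.inl h))
              · have := hno t hst hA hC hB
                exact Or.inr (Or.inr (Or.inr this))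
      set T1 := Finset.univ.filter (fun t : Fin 4 => e1 t = u ∨ e2 t = u) with hT1def
      set T2 := Finset.univ.filter (fun t : Fin 4 => e1 t = u' ∨ e2 t = u') with hT2def
      set T3 := Finset.univ.filter (fun t : Fin 4 => selfish t) with hT3def
      have hc1 : T1.card ≤ 1 := Finset.card_le_one.mpr (by
        intro a ha b hb
        simp only [hT1def, Finset.mem_filter, Finset.mem_univ, true_and] at ha hb
        exact hT1 a b ha hb)
      have hc2 : T2.card ≤ 1 := Finset.card_le_one.mpr (by
        intro a ha b hb
        simp only [hT2def, Finset.mem_filter, Finset.mem_univ, true_and] at ha hb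
        exact hT2 a b ha hb)
      have hc3 : T3.card ≤ 1 := Finset.card_le_one.mpr (by
        intro a ha b hb
        simp only [hT3def, Finset.mem_filter, Finset.mem_univ, true_and] at ha hb
        exact hself_unique a b ha hb)
      have hcover : (Finset.univ : Finset (Fin 4)) ⊆ T1 ∪ T2 ∪ T3 := by
        intro t _
        simp only [hT1def, hT2def, hT3def, Finset.mem_union, Finset.mem_filter,
          Finset.mem_univ, true_and]
        rcases hall t with h | h | h
        · exact Or.inr h
        · exact Or.inl (Or.inl h)
        · exact Or.inl (Or.inr h)
      have h4c : (4 : ℕ) ≤ (T1 ∪ T2 ∪ T3).card := by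
        have := Finset.card_le_card hcover
        rwa [Finset.card_univ, Fintype.card_fin] at this
      have hle3 : (T1 ∪ T2 ∪ T3).card ≤ 3 := by
        calc (T1 ∪ T2 ∪ T3).card ≤ (T1 ∪ T2).card + T3.card := Finset.card_union_le _ _
          _ ≤ T1.card + T2.card + T3.card := by
              have := Finset.card_union_le T1 T2
              omega
          _ ≤ 3 := by omega
      omega
    obtain ⟨t, hnst, hd1, hd2, hd3, hd4⟩ := hexd
    have hptk : pp t = k := hnsk t hnst
    have hsep := sep_pair (hne12 t) huu hd1 hd2 hd3 hd4
      (fun x hP hQ => (hpp2 t x hP).symm.trans (hqx x hQ))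
    rcases hsep with h | h | h
    · exact Or.inl (h.symm.trans hptk)
    · exact absurd h.1 hnst
    · refine Or.inr ⟨?_, h.2⟩
      rw [← hptk]
      exact h.1
  refine ⟨k, hk1, ?_⟩
  intro x
  have hcc : (Finset.univ : Finset A).card < C.card := by
    rw [Finset.card_univ]
    have := le_max_left (Fintype.card A + 1) 8
    omega
  obtain ⟨u, hu, u', hu', huu, hxuu⟩ := Finset.exists_ne_map_eq_of_card_lt_of_maps_to
    hcc (fun a _ => Finset.mem_univ (x a))
  obtain ⟨q, hq1, hq2⟩ := hp u hu u' hu' huu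
  have hfq := hq2 x hxuu
  rcases hstar u hu u' hu' huu q hq2 with h | ⟨hk', hq'⟩
  · rw [hfq, h]
  · rw [hfq]
    rcases hq' with h5 | h5 <;> rcases hk' with h6 | h6 <;> rw [h5, h6]
    · exact hxuu
    · exact hxuu.symm

/-- Every preclone that contains a nontrivial operation contains a nontrivial
operation of bounded arity. -/
lemma small_nontrivial [Fintype S] [Fintype A] [Nontrivial A] (hF : IsSPreclone F)
    {f : SOp S A} (hf : f ∈ F) (hnt : f ∉ SJ S A) :
    ∃ g ∈ F, g ∉ SJ S A ∧
      g.n + 1 ≤ Fintype.card S * max (Fintype.card A + 1) 8 := by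
  suffices h : ∀ (N : ℕ) (f : SOp S A), f.n = N → f ∈ F → f ∉ SJ S A →
      ∃ g ∈ F, g ∉ SJ S A ∧
        g.n + 1 ≤ Fintype.card S * max (Fintype.card A + 1) 8 from
    h f.n f rfl hf hnt
  intro N
  induction N using Nat.strong_induction_on with
  | _ N IH =>
    intro f hfn hf hnt
    set M := max (Fintype.card A + 1) 8 with hM
    by_cases hle : f.n + 1 ≤ Fintype.card S * M
    · exact ⟨f, hf, hnt, hle⟩
    · push_neg at hle
      by_cases hsmaller : ∃ g ∈ F, g.n < f.n ∧ g ∉ SJ S A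
      · obtain ⟨g, hg, hlt, hgnt⟩ := hsmaller
        exact IH g.n (by omega) g rfl hg hgnt
      · push_neg at hsmaller
        exfalso
        apply hnt
        classical
        obtain ⟨s₀, hs₀⟩ := Fintype.exists_lt_card_fiber_of_mul_lt_card f.sgn
          (n := M) (by rw [Fintype.card_fin]; omega)
        set C := Finset.univ.filter (fun v => f.sgn v = s₀) with hC
        have hcard : M ≤ C.card := by
          have h2 : M < C.card := by
            rw [hC]
            convert hs₀ using 2
          omega
        have hpfam : ∀ i ∈ C, ∀ i' ∈ C, i ≠ i' →
            ∃ p, f.sgn p = 1 ∧ ∀ x, x i = x i' → f.fn x = x p := by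
          intro i hi i' hi' hne
          have hsi : f.sgn i = f.sgn i' := by
            simp only [hC, Finset.mem_filter, Finset.mem_univ, true_and] at hi hi'
            rw [hi, hi']
          obtain ⟨g, hgF, hgn, ψ, hfn2, hsgn2⟩ := merge_spec hF hf hne hsi
          have hgSJ : g ∈ SJ S A := hsmaller g hgF (by omega)
          obtain ⟨kg, hkg1, hkg2⟩ := hgSJ
          refine ⟨ψ kg, ?_, ?_⟩
          · rw [← hsgn2 kg]; exact hkg1
          · intro x hx
            rw [hfn2 x hx, hkg2]
        obtain ⟨k, hk1, hk2⟩ := sw_proj f.fn f.sgn C (by omega) hpfam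
        exact ⟨k, hk1, hk2⟩

end Aux

/-- On a finite set `A` with at least two elements there are only finitely many
maximal `S`-preclones and only finitely many minimal `S`-preclones. -/
theorem finitely_many_maximal_minimal_SPreclones {S A : Type*} [Monoid S] [Fintype S]
    [Fintype A] [Nontrivial A] :
    { F : Set (SOp S A) | IsSPreclone F ∧ F ≠ Set.univ ∧
        ∀ G, IsSPreclone G → F ⊂ G → G = Set.univ }.Finite ∧
    { F : Set (SOp S A) | IsSPreclone F ∧ F ≠ SJ S A ∧
        ∀ G, IsSPreclone G → G ⊂ F → G = SJ S A }.Finite := by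
  classical
  set c := Fintype.card A with hc
  set mrow := Fintype.card A ^ (c + 1) with hmrow
  set B := Fintype.card S * Fintype.card A ^ mrow +
    Fintype.card S * max (Fintype.card A + 1) 8 + 2 with hB
  have hA1 : 1 ≤ Fintype.card A := Fintype.card_pos
  -- the bounded subtype is finite
  have hfin : Finite {h : SOp S A // h.n < B} := by
    let emb : {h : SOp S A // h.n < B} →
        Σ n : Fin B, ((Fin (n.val + 1) → A) → A) × (Fin (n.val + 1) → S) :=
      fun h => ⟨⟨h.val.n, h.prop⟩, h.val.fn, h.val.sgn⟩
    have hinj : Function.Injective emb := by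
      rintro ⟨⟨n1, f1, s1⟩, hb1⟩ ⟨⟨n2, f2, s2⟩, hb2⟩ heq
      have heq' : (⟨⟨n1, hb1⟩, (f1, s1)⟩ :
          Σ n : Fin B, ((Fin (n.val + 1) → A) → A) × (Fin (n.val + 1) → S)) =
          ⟨⟨n2, hb2⟩, (f2, s2)⟩ := heq
      rw [Sigma.mk.inj_iff] at heq'
      obtain ⟨h1, h2⟩ := heq'
      have hn : n1 = n2 := by
        have := congrArg Fin.val h1
        simpa using this
      subst hn
      have h3 := eq_of_heq h2
      injection h3 with hf hs
      subst hf; subst hs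
      rfl
    exact Finite.of_injective emb hinj
  set Φ : Set (SOp S A) → Set {h : SOp S A // h.n < B} :=
    fun G => {h | h.val ∈ G} with hΦdef
  have hmem : ∀ {G1 G2 : Set (SOp S A)}, Φ G1 = Φ G2 →
      ∀ f : SOp S A, f.n < B → (f ∈ G1 ↔ f ∈ G2) := by
    intro G1 G2 h f hfB
    constructor <;> intro hfm
    · have h2 : (⟨f, hfB⟩ : {h : SOp S A // h.n < B}) ∈ Φ G1 := hfm
      rw [h] at h2; exact h2
    · have h2 : (⟨f, hfB⟩ : {h : SOp S A // h.n < B}) ∈ Φ G2 := hfm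
      rw [← h] at h2; exact h2
  have hBloc : ∀ ρ : SRel S A, ρ.m + 1 ≤ mrow →
      Fintype.card S * Fintype.card A ^ (ρ.m + 1) < B := by
    intro ρ hρ
    have h1 : Fintype.card A ^ (ρ.m + 1) ≤ Fintype.card A ^ mrow :=
      Nat.pow_le_pow_right hA1 hρ
    have h2 : Fintype.card S * Fintype.card A ^ (ρ.m + 1) ≤
        Fintype.card S * Fintype.card A ^ mrow := Nat.mul_le_mul_left _ h1
    omega
  -- the key Galois fact for the maximal side
  have keyG : ∀ G : Set (SOp S A), IsSPreclone G → G ≠ Set.univ →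
      (G ⊆ SPol {ρ : SRel S A | ρ.m + 1 ≤ mrow ∧ ∀ f ∈ G, SPreserves f ρ} ∧
       SPol {ρ : SRel S A | ρ.m + 1 ≤ mrow ∧ ∀ f ∈ G, SPreserves f ρ} ≠ Set.univ) := by
    intro G hG hGuniv
    set Q := {ρ : SRel S A | ρ.m + 1 ≤ mrow ∧ ∀ f ∈ G, SPreserves f ρ} with hQ
    have hsub : G ⊆ SPol Q := fun f hf ρ hρ => hρ.2 f hf
    have hg₀ : ∃ g₀ : SOp S A, g₀ ∉ G ∧ g₀.n ≤ c := by
      by_contra hcon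
      push_neg at hcon
      apply hGuniv
      apply Set.eq_univ_of_forall
      intro f
      refine gen_bounded hG ?_ f
      intro g hgc
      by_contra hgG
      have := hcon g hgG
      omega
    obtain ⟨g₀, hg₀G, hg₀c⟩ := hg₀
    have hpos : 0 < Fintype.card (Fin (g₀.n + 1) → A) := Fintype.card_pos
    set mρ := Fintype.card (Fin (g₀.n + 1) → A) - 1 with hmρ
    have hmρ1 : mρ + 1 = Fintype.card (Fin (g₀.n + 1) → A) := by omega
    set E : Fin (mρ + 1) ≃ (Fin (g₀.n + 1) → A) :=
      (finCongr hmρ1).trans (Fintype.equivFin _).symm with hE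
    set rhoL : SRel S A :=
      ⟨mρ, fun s => {col | Der G g₀.sgn s (fun z => col (E.symm z))}⟩ with hrhoL
    have hrhoLQ : rhoL ∈ Q := by
      constructor
      · show mρ + 1 ≤ mrow
        rw [hmρ1, Fintype.card_fun, Fintype.card_fin]
        exact Nat.pow_le_pow_right hA1 (by omega)
      · intro f hf s r hr
        exact Der.comp f hf s (fun i => fun z => r i (E.symm z)) (fun i => hr i)
    have hg₀H : g₀ ∉ SPol Q := by
      intro hmem2
      apply hg₀G
      have hpres := hmem2 rhoL hrhoLQ
      have hproj : ∀ i : Fin (g₀.n + 1),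
          (fun q => E q i) ∈ rhoL.rel (g₀.sgn i * 1) := by
        intro i
        show Der G g₀.sgn (g₀.sgn i * 1) (fun z => E (E.symm z) i)
        rw [mul_one, show (fun z : Fin (g₀.n + 1) → A => E (E.symm z) i)
          = fun z => z i from funext fun z => congrFun (E.apply_symm_apply z) i]
        exact Der.proj i
      have hconc := hpres 1 (fun i => fun q => E q i) hproj
      have hder : Der G g₀.sgn 1 g₀.fn := by
        have h2 : (fun z : Fin (g₀.n + 1) → A => g₀.fn (fun i => E (E.symm z) i))
            = g₀.fn := by
          funext z
          exact congrArg g₀.fn (funext fun i => congrFun (E.apply_symm_apply z) i)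
        rw [← h2]
        exact hconc
      exact der_mem hG hder
    exact ⟨hsub, fun h => hg₀H (h ▸ Set.mem_univ g₀)⟩
  haveI := hfin
  constructor
  · -- maximal side
    apply Set.Finite.of_finite_image (f := Φ) (Set.toFinite _)
    intro F1 h1 F2 h2 hΦeq
    obtain ⟨hF1, hF1u, hF1max⟩ := h1
    obtain ⟨hF2, hF2u, hF2max⟩ := h2
    have hQeq : {ρ : SRel S A | ρ.m + 1 ≤ mrow ∧ ∀ f ∈ F1, SPreserves f ρ}
        = {ρ : SRel S A | ρ.m + 1 ≤ mrow ∧ ∀ f ∈ F2, SPreserves f ρ} := by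
      ext ρ
      simp only [Set.mem_setOf_eq]
      constructor
      · rintro ⟨hm, hpres⟩
        refine ⟨hm, loc_preserves hF2 ρ B (hBloc ρ hm) ?_⟩
        intro f hf hfB
        exact hpres f ((hmem hΦeq f (by omega)).mpr hf)
      · rintro ⟨hm, hpres⟩
        refine ⟨hm, loc_preserves hF1 ρ B (hBloc ρ hm) ?_⟩
        intro f hf hfB
        exact hpres f ((hmem hΦeq f (by omega)).mp hf)
    obtain ⟨hsub1, hne1⟩ := keyG F1 hF1 hF1u
    obtain ⟨hsub2, hne2⟩ := keyG F2 hF2 hF2u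
    have hH1 : F1 = SPol {ρ | ρ.m + 1 ≤ mrow ∧ ∀ f ∈ F1, SPreserves f ρ} := by
      by_contra hne
      exact hne1 (hF1max _ (isSPreclone_SPol _)
        (Set.ssubset_iff_subset_ne.mpr ⟨hsub1, hne⟩))
    have hH2 : F2 = SPol {ρ | ρ.m + 1 ≤ mrow ∧ ∀ f ∈ F2, SPreserves f ρ} := by
      by_contra hne
      exact hne2 (hF2max _ (isSPreclone_SPol _)
        (Set.ssubset_iff_subset_ne.mpr ⟨hsub2, hne⟩))
    rw [hH1, hQeq, ← hH2]
  · -- minimal side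
    apply Set.Finite.of_finite_image (f := Φ) (Set.toFinite _)
    intro F1 h1 F2 h2 hΦeq
    obtain ⟨hF1, hF1sj, hF1min⟩ := h1
    obtain ⟨hF2, hF2sj, hF2min⟩ := h2
    have hnt1 : ∃ f ∈ F1, f ∉ SJ S A := by
      by_contra hcon
      push_neg at hcon
      exact hF1sj (Set.Subset.antisymm hcon (SJ_subset hF1))
    obtain ⟨f, hfF1, hfnt⟩ := hnt1
    obtain ⟨g, hgF1, hgnt, hgB⟩ := small_nontrivial hF1 hfF1 hfnt
    have hgB' : g.n < B := by omega
    have hSSg1 : SSg {g} = F1 := by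
      have hsub : SSg {g} ⊆ F1 := SSg_subset hF1 (Set.singleton_subset_iff.mpr hgF1)
      by_contra hne
      have hss : SSg {g} ⊂ F1 := Set.ssubset_iff_subset_ne.mpr ⟨hsub, hne⟩
      have h2 := hF1min _ (isSPreclone_SSg _) hss
      apply hgnt
      rw [← h2]
      exact subset_SSg _ rfl
    have hgF2 : g ∈ F2 := (hmem hΦeq g hgB').mp hgF1
    have hSSg2 : SSg {g} = F2 := by
      have hsub : SSg {g} ⊆ F2 := SSg_subset hF2 (Set.singleton_subset_iff.mpr hgF2)
      by_contra hne
      have hss : SSg {g} ⊂ F2 := Set.ssubset_iff_subset_ne.mpr ⟨hsub, hne⟩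
      have h2 := hF2min _ (isSPreclone_SSg _) hss
      apply hgnt
      rw [← h2]
      exact subset_SSg _ rfl
    rw [← hSSg1, hSSg2]

end SPreclone
end
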